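/- arXiv:2407.10024 — 5 statements merged into one kernel-verified Lean document; each statement's English description precedes it below -/
import Mathlib

section
/- The number of permutations of [N] all of whose cycle lengths are even equals N! · 2^{-N} · binomial(N, N/2), when N is even. -/
open Nat Function Equiv

namespace EvenCycleAux

variable {α : Type*}

theorem chi_iterate {σ : Equiv.Perm α} {χ : α → ZMod 2}
    (hχ : ∀ x, χ (σ x) = χ x + 1) (n : ℕ) (x : α) :
    χ ((σ ^ n) x) = χ x + n := by
  induction n with
  | zero => simp
  | succ n ih =>
      rw [show σ ^ (n+1) = σ * σ ^ n from pow_succ' σ n, Equiv.Perm.mul_apply, hχ, ih]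
      push_cast
      ring

theorem pow_eq_parity [Fintype α] (σ : Equiv.Perm α) (r : α)
    (hev : Even (minimalPeriod ⇑σ r)) {j k : ℕ} (h : (σ ^ j) r = (σ ^ k) r) :
    j % 2 = k % 2 := by
  have hTpos : 0 < minimalPeriod (⇑σ) r := by
    apply IsPeriodicPt.minimalPeriod_pos (orderOf_pos σ)
    show (⇑σ)^[orderOf σ] r = r
    rw [Equiv.Perm.iterate_eq_pow, pow_orderOf_eq_one]
    rfl
  have h4 : j % minimalPeriod (⇑σ) r = k % minimalPeriod (⇑σ) r := by
    apply iterate_injOn_Iio_minimalPeriod (f := ⇑σ) (x := r)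
      (Nat.mod_lt _ hTpos) (Nat.mod_lt _ hTpos)
    simp only [iterate_mod_minimalPeriod_eq, Equiv.Perm.iterate_eq_pow]
    exact h
  have h2T : 2 ∣ minimalPeriod (⇑σ) r := hev.two_dvd
  rw [← Nat.mod_mod_of_dvd j h2T, ← Nat.mod_mod_of_dvd k h2T, h4]

open scoped Classical in
theorem even_iff_coloring [Fintype α] (σ : Equiv.Perm α) :
    (∀ x, Even (minimalPeriod σ x)) ↔ ∃ χ : α → ZMod 2, ∀ x, χ (σ x) = χ x + 1 := by
  constructor
  · intro h
    let s : Setoid α := ⟨σ.SameCycle, ⟨Equiv.Perm.SameCycle.refl σ,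
      Equiv.Perm.SameCycle.symm, Equiv.Perm.SameCycle.trans⟩⟩
    have spec : ∀ x : α, ∃ k : ℕ, (σ ^ k) (Quotient.out (s := s) (Quotient.mk s x)) = x := by
      intro x
      have hx : σ.SameCycle (Quotient.out (s := s) (Quotient.mk s x)) x :=
        Quotient.mk_out (s := s) x
      obtain ⟨i, _, hi⟩ := hx.exists_pow_eq'
      exact ⟨i, hi⟩
    refine ⟨fun x => if (∃ k : ℕ, k % 2 = 0 ∧ (σ ^ k) (Quotient.out (s := s) (Quotient.mk s x)) = x)
      then 0 else 1, fun x => ?_⟩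
    have hout : Quotient.out (s := s) (Quotient.mk s (σ x)) = Quotient.out (s := s) (Quotient.mk s x) := by
      congr 1
      exact Quotient.sound (s := s) ((Equiv.Perm.sameCycle_apply_left).mpr (Equiv.Perm.SameCycle.refl σ x))
    simp only [hout]
    set r := Quotient.out (s := s) (Quotient.mk s x) with hr
    have hev : Even (minimalPeriod (⇑σ) r) := h r
    have hiff : (∃ k : ℕ, k % 2 = 0 ∧ (σ ^ k) r = σ x) ↔ ¬ (∃ k : ℕ, k % 2 = 0 ∧ (σ ^ k) r = x) := by
      constructor
      · rintro ⟨j, hj2, hj⟩ ⟨k, hk2, hk⟩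
        have : (σ ^ j) r = (σ ^ (k+1)) r := by
          rw [hj, show σ ^ (k+1) = σ * σ ^ k from pow_succ' σ k, Equiv.Perm.mul_apply, hk]
        have := pow_eq_parity σ r hev this
        omega
      · intro hC2
        obtain ⟨k0, hk0⟩ := spec x
        have hodd : k0 % 2 = 1 := by
          rcases Nat.mod_two_eq_zero_or_one k0 with h' | h'
          · exact absurd ⟨k0, h', hk0⟩ hC2
          · exact h'
        refine ⟨k0 + 1, by omega, ?_⟩
        rw [show σ ^ (k0+1) = σ * σ ^ k0 from pow_succ' σ k0, Equiv.Perm.mul_apply, hk0]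
    by_cases hC2 : (∃ k : ℕ, k % 2 = 0 ∧ (σ ^ k) r = x)
    · rw [if_pos hC2, if_neg (fun hC1 => (hiff.mp hC1) hC2)]
      decide
    · rw [if_neg hC2, if_pos (hiff.mpr hC2)]
      decide
  · rintro ⟨χ, hχ⟩ x
    have hper : IsPeriodicPt σ (minimalPeriod σ x) x := isPeriodicPt_minimalPeriod _ _
    have hit : (σ ^ minimalPeriod (⇑σ) x) x = x := hper
    have := chi_iterate hχ (minimalPeriod (⇑σ) x) x
    rw [hit] at this
    have h0 : ((minimalPeriod (⇑σ) x : ℕ) : ZMod 2) = 0 := by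
      have h' : χ x + 0 = χ x + (minimalPeriod (⇑σ) x : ZMod 2) := by
        rw [add_zero]; exact this
      exact (add_left_cancel h').symm
    obtain ⟨t, ht⟩ := (ZMod.natCast_eq_zero_iff _ 2).mp h0
    exact ⟨t, by omega⟩

theorem minimalPeriod_semiconj {f : α → α} {g : β → β} {e : α → β}
    (he : Injective e) (hsc : ∀ x, g (e x) = e (f x)) (x : α) :
    minimalPeriod g (e x) = minimalPeriod f x := by
  have hit : ∀ n y, g^[n] (e y) = e (f^[n] y) := by
    intro n
    induction n with
    | zero => intro y; simp
    | succ n ih =>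
        intro y
        rw [Function.iterate_succ_apply, Function.iterate_succ_apply, hsc, ih]
  have key : ∀ n, IsPeriodicPt g n (e x) ↔ IsPeriodicPt f n x := by
    intro n
    constructor
    · intro h
      have : g^[n] (e x) = e x := h
      rw [hit] at this
      exact he this
    · intro h
      have : f^[n] x = x := h
      show g^[n] (e x) = e x
      rw [hit, this]
  apply Nat.dvd_antisymm
  · exact ((key _).mpr (isPeriodicPt_minimalPeriod f x)).minimalPeriod_dvd
  · exact ((key _).mp (isPeriodicPt_minimalPeriod g (e x))).minimalPeriod_dvd

theorem minimalPeriod_subtypePerm {p : α → Prop} (τ : Equiv.Perm α)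
    (hp : ∀ x, p (τ x) ↔ p x) (y : Subtype p) :
    minimalPeriod ⇑(τ.subtypePerm hp) y = minimalPeriod ⇑τ ↑y := by
  exact (minimalPeriod_semiconj (e := (Subtype.val : Subtype p → α))
    Subtype.val_injective (fun x => rfl) y).symm

theorem minimalPeriod_permCongr (e : α ≃ β) (σ : Equiv.Perm α) (x : α) :
    minimalPeriod ⇑(e.permCongr σ) (e x) = minimalPeriod ⇑σ x :=
  minimalPeriod_semiconj e.injective (fun y => by simp) x

theorem card_AE_congr (e : α ≃ β) :
    Nat.card {σ : Equiv.Perm α // ∀ x, Even (minimalPeriod ⇑σ x)}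
      = Nat.card {σ : Equiv.Perm β // ∀ x, Even (minimalPeriod ⇑σ x)} := by
  apply Nat.card_congr
  refine (e.permCongr).subtypeEquiv fun σ => ⟨fun h y => ?_, fun h x => ?_⟩
  · have := minimalPeriod_permCongr e σ (e.symm y)
    rw [e.apply_symm_apply] at this
    rw [this]
    exact h _
  · have := minimalPeriod_permCongr e σ x
    rw [← this]
    exact h _

theorem apply_ne_self {σ : Equiv.Perm α} (h : ∀ x, Even (minimalPeriod ⇑σ x)) (x : α) :
    σ x ≠ x := by
  intro hfix
  have h1 := h x
  rw [minimalPeriod_eq_one_iff_isFixedPt.mpr hfix] at h1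
  exact (Nat.not_even_iff.mpr rfl) h1



set_option linter.unusedSectionVars false

variable [Fintype α] [DecidableEq α]

theorem AE_transfer {a b c : α} (hb : b ≠ a) (hc : c ≠ a)
    {σ : Equiv.Perm α} (hσa : σ a = b) (hσc : σ c = a)
    (hp : ∀ x, ((σ * Equiv.swap a c * Equiv.swap c b) x ≠ a ∧ (σ * Equiv.swap a c * Equiv.swap c b) x ≠ b) ↔
      (x ≠ a ∧ x ≠ b)) :
    (∀ x, Even (minimalPeriod ⇑σ x)) ↔
      (∀ y : {x : α // x ≠ a ∧ x ≠ b},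
        Even (minimalPeriod ⇑((σ * Equiv.swap a c * Equiv.swap c b).subtypePerm hp) y)) := by
  classical
  set τ := σ * Equiv.swap a c * Equiv.swap c b with hτdef
  have hτ : ∀ x, τ x = σ (Equiv.swap a c (Equiv.swap c b x)) := fun x => rfl
  have hτa : τ a = a := by
    rw [hτ, Equiv.swap_apply_of_ne_of_ne hc.symm hb.symm, Equiv.swap_apply_left, hσc]
  have hτb : τ b = b := by
    rw [hτ, Equiv.swap_apply_right, Equiv.swap_apply_right, hσa]
  have hτc : c ≠ b → τ c = σ b := fun hcb => by
    rw [hτ, Equiv.swap_apply_left, Equiv.swap_apply_of_ne_of_ne hb (Ne.symm hcb)]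
  have hτother : ∀ x, x ≠ a → x ≠ b → x ≠ c → τ x = σ x := fun x hxa hxb hxc => by
    rw [hτ, Equiv.swap_apply_of_ne_of_ne hxc hxb, Equiv.swap_apply_of_ne_of_ne hxa hxc]
  have hsub : ∀ (y : {x : α // x ≠ a ∧ x ≠ b}),
      minimalPeriod ⇑(τ.subtypePerm hp) y = minimalPeriod ⇑τ ↑y :=
    fun y => minimalPeriod_subtypePerm τ hp y
  have h2 : (2 : ZMod 2) = 0 := rfl
  rw [even_iff_coloring σ, even_iff_coloring (τ.subtypePerm hp)]
  constructor
  · rintro ⟨χ, hχ⟩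
    refine ⟨fun y => χ ↑y, fun y => ?_⟩
    have hcoe : ((τ.subtypePerm hp) y : α) = τ ↑y := rfl
    show χ ((τ.subtypePerm hp) y : α) = χ ↑y + 1
    rw [hcoe]
    obtain ⟨x, hxa, hxb⟩ := y
    by_cases hxc : x = c
    · subst hxc
      rw [hτc hxb]
      have e1 : χ (σ b) = χ b + 1 := hχ b
      have e2 : χ b = χ a + 1 := by rw [← hσa]; exact hχ a
      have e3 : χ a = χ x + 1 := by rw [← hσc]; exact hχ x
      rw [e1, e2, e3]
      linear_combination χ x * 0 + h2
    · rw [hτother x hxa hxb hxc]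
      exact hχ x
  · rintro ⟨χ', hχ'⟩
    have hστ : ∀ x, σ x = τ (Equiv.swap c b (Equiv.swap a c x)) := by
      intro x
      rw [hτ, Equiv.swap_apply_self, Equiv.swap_apply_self]
    set vc : ZMod 2 := if h : c ≠ a ∧ c ≠ b then χ' ⟨c, h⟩ + 1 else 0 with hvc
    set χ : α → ZMod 2 := fun x =>
      if h : x ≠ a ∧ x ≠ b then χ' ⟨x, h⟩ else (if x = a then vc else vc + 1) with hχdef
    have hχa : χ a = vc := by simp [hχdef]
    have hχb : χ b = vc + 1 := by
      simp only [hχdef]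
      rw [dif_neg (by simp), if_neg hb]
    have hχoth : ∀ x (h : x ≠ a ∧ x ≠ b), χ x = χ' ⟨x, h⟩ := fun x h => by
      simp only [hχdef]; rw [dif_pos h]
    have hρ : ∀ (x : α) (h : x ≠ a ∧ x ≠ b), τ x = ↑((τ.subtypePerm (p := fun x => x ≠ a ∧ x ≠ b) hp) ⟨x, h⟩) := fun x h => rfl
    have hτin : ∀ (x : α), x ≠ a → x ≠ b → (τ x ≠ a ∧ τ x ≠ b) := fun x h1 h2 =>
      (hp x).mpr ⟨h1, h2⟩
    have hχτ : ∀ (x : α) (h : x ≠ a ∧ x ≠ b), χ (τ x) = χ' ⟨x, h⟩ + 1 := by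
      intro x h
      rw [hχoth (τ x) (hτin x h.1 h.2)]
      have := hχ' ⟨x, h⟩
      convert this using 2
      rfl
    refine ⟨χ, fun x => ?_⟩
    by_cases hxa : x = a
    · subst hxa
      rw [hσa, hχb, hχa]
    by_cases hxc : x = c
    · subst hxc
      rw [hσc, hχa]
      by_cases hcb : x = b
      · rw [hcb, hχb]
        rw [hvc, dif_neg (by simp [hcb])]
        decide
      · rw [hχoth x ⟨hxa, hcb⟩, hvc, dif_pos ⟨hxa, hcb⟩]
    by_cases hxb : x = b
    · have hbc : x ≠ c := hxc
      have hσb : σ x = τ c := by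
        rw [hστ, Equiv.swap_apply_of_ne_of_ne hxa hbc, hxb, Equiv.swap_apply_right]
      have hcp : c ≠ a ∧ c ≠ b := ⟨hc, fun h => hbc (hxb.trans h.symm)⟩
      rw [hσb, hχτ c hcp, hxb, hχb, hvc, dif_pos hcp]
      linear_combination -h2
    · have hσx : σ x = τ x := by
        rw [hστ, Equiv.swap_apply_of_ne_of_ne hxa hxc,
          Equiv.swap_apply_of_ne_of_ne hxc hxb]
      rw [hσx, hχτ x ⟨hxa, hxb⟩, hχoth x ⟨hxa, hxb⟩]

section Fib

variable {a b c : α}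

theorem tau_a (hb : b ≠ a) (hc : c ≠ a) {σ : Equiv.Perm α} (hσc : σ c = a) :
    (σ * Equiv.swap a c * Equiv.swap c b) a = a := by
  show σ (Equiv.swap a c (Equiv.swap c b a)) = a
  rw [Equiv.swap_apply_of_ne_of_ne hc.symm hb.symm, Equiv.swap_apply_left, hσc]

theorem tau_b {σ : Equiv.Perm α} (hσa : σ a = b) :
    (σ * Equiv.swap a c * Equiv.swap c b) b = b := by
  show σ (Equiv.swap a c (Equiv.swap c b b)) = b
  rw [Equiv.swap_apply_right, Equiv.swap_apply_right, hσa]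

theorem hp_lemma (hb : b ≠ a) (hc : c ≠ a) {σ : Equiv.Perm α} (hσa : σ a = b) (hσc : σ c = a) :
    ∀ x, ((σ * Equiv.swap a c * Equiv.swap c b) x ≠ a ∧ (σ * Equiv.swap a c * Equiv.swap c b) x ≠ b) ↔
      (x ≠ a ∧ x ≠ b) := by
  intro x
  symm
  have hτa : (σ * Equiv.swap a c * Equiv.swap c b) a = a := tau_a hb hc hσc
  have hτb : (σ * Equiv.swap a c * Equiv.swap c b) b = b := tau_b hσa
  set τ := σ * Equiv.swap a c * Equiv.swap c b
  constructor
  · rintro ⟨h1, h2⟩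
    exact ⟨fun h => h1 (τ.injective (by rw [h, hτa])), fun h => h2 (τ.injective (by rw [h, hτb]))⟩
  · rintro ⟨h1, h2⟩
    exact ⟨fun h => h1 (by rw [h, hτa]), fun h => h2 (by rw [h, hτb])⟩

noncomputable def ext' (a b c : α) (ρ : Equiv.Perm {x : α // x ≠ a ∧ x ≠ b}) : Equiv.Perm α :=
  Equiv.Perm.ofSubtype ρ * Equiv.swap c b * Equiv.swap a c

theorem ext'_a (hb : b ≠ a) (ρ : Equiv.Perm {x : α // x ≠ a ∧ x ≠ b}) : ext' a b c ρ a = b := by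
  show Equiv.Perm.ofSubtype ρ (Equiv.swap c b (Equiv.swap a c a)) = b
  rw [Equiv.swap_apply_left, Equiv.swap_apply_left]
  exact Equiv.Perm.ofSubtype_apply_of_not_mem ρ (by simp)

theorem ext'_c (hb : b ≠ a) (hc : c ≠ a) (ρ : Equiv.Perm {x : α // x ≠ a ∧ x ≠ b}) :
    ext' a b c ρ c = a := by
  show Equiv.Perm.ofSubtype ρ (Equiv.swap c b (Equiv.swap a c c)) = a
  rw [Equiv.swap_apply_right, Equiv.swap_apply_of_ne_of_ne hc.symm hb.symm]
  exact Equiv.Perm.ofSubtype_apply_of_not_mem ρ (by simp)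

theorem ext'_cancel (ρ : Equiv.Perm {x : α // x ≠ a ∧ x ≠ b}) :
    ext' a b c ρ * Equiv.swap a c * Equiv.swap c b = Equiv.Perm.ofSubtype ρ := by
  simp [ext', mul_assoc]

theorem ext'_subtypePerm (ρ : Equiv.Perm {x : α // x ≠ a ∧ x ≠ b})
    (hp' : ∀ x, ((ext' a b c ρ * Equiv.swap a c * Equiv.swap c b) x ≠ a ∧
        (ext' a b c ρ * Equiv.swap a c * Equiv.swap c b) x ≠ b) ↔ (x ≠ a ∧ x ≠ b)) :
    (ext' a b c ρ * Equiv.swap a c * Equiv.swap c b).subtypePerm hp' = ρ := by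
  apply Equiv.ext
  intro y
  apply Subtype.ext
  show (ext' a b c ρ * Equiv.swap a c * Equiv.swap c b) ↑y = ↑(ρ y)
  rw [ext'_cancel]
  exact Equiv.Perm.ofSubtype_apply_coe ρ y

theorem ofSubtype_subtypePerm_eq {τ : Equiv.Perm α} (hτa : τ a = a) (hτb : τ b = b)
    (hp : ∀ x, (τ x ≠ a ∧ τ x ≠ b) ↔ (x ≠ a ∧ x ≠ b)) :
    Equiv.Perm.ofSubtype (τ.subtypePerm (p := fun x => x ≠ a ∧ x ≠ b) hp) = τ := by
  apply Equiv.ext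
  intro x
  by_cases h : x ≠ a ∧ x ≠ b
  · rw [Equiv.Perm.ofSubtype_subtypePerm_of_mem (p := fun x => x ≠ a ∧ x ≠ b) hp h]
  · rw [Equiv.Perm.ofSubtype_subtypePerm_of_not_mem (p := fun x => x ≠ a ∧ x ≠ b) hp h]
    rcases not_and_or.mp h with h | h
    · rw [not_not.mp h, hτa]
    · rw [not_not.mp h, hτb]

noncomputable def fibEquiv (hb : b ≠ a) (hc : c ≠ a) :
    {σ : Equiv.Perm α // (∀ x, Even (minimalPeriod ⇑σ x)) ∧ σ a = b ∧ σ c = a}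
    ≃ {ρ : Equiv.Perm {x : α // x ≠ a ∧ x ≠ b} // ∀ y, Even (minimalPeriod ⇑ρ y)} where
  toFun s := ⟨(s.1 * Equiv.swap a c * Equiv.swap c b).subtypePerm
      (hp_lemma hb hc s.2.2.1 s.2.2.2),
    (AE_transfer hb hc s.2.2.1 s.2.2.2 (hp_lemma hb hc s.2.2.1 s.2.2.2)).mp s.2.1⟩
  invFun r := ⟨ext' a b c r.1, by
    have hσa := ext'_a (c := c) hb r.1
    have hσc := ext'_c hb hc r.1
    refine ⟨(AE_transfer hb hc hσa hσc (hp_lemma hb hc hσa hσc)).mpr ?_, hσa, hσc⟩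
    intro y
    rw [ext'_subtypePerm r.1 (hp_lemma hb hc hσa hσc)]
    exact r.2 y⟩
  left_inv s := by
    apply Subtype.ext
    dsimp only
    unfold ext'
    rw [ofSubtype_subtypePerm_eq (tau_a hb hc s.2.2.2) (tau_b s.2.2.1)]
    simp [mul_assoc]
  right_inv r := by
    apply Subtype.ext
    dsimp only
    exact ext'_subtypePerm r.1 _

end Fib

set_option maxHeartbeats 1000000 in
theorem card_rec (n : ℕ) :
    Nat.card {σ : Equiv.Perm (Fin (n+2)) // ∀ x, Even (minimalPeriod ⇑σ x)}
      = (n+1)^2 * Nat.card {σ : Equiv.Perm (Fin n) // ∀ x, Even (minimalPeriod ⇑σ x)} := by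
  classical
  have ha : True := trivial
  let a : Fin (n+2) := Fin.last (n+1)
  have hinvne : ∀ (σ : Equiv.Perm (Fin (n+2))), (∀ x, Even (minimalPeriod ⇑σ x)) → σ⁻¹ a ≠ a := by
    intro σ hσ h
    have h2 : σ (σ⁻¹ a) = σ a := congrArg σ h
    rw [← Equiv.Perm.mul_apply, mul_inv_cancel, Equiv.Perm.one_apply] at h2
    exact apply_ne_self hσ a h2.symm
  let g : {σ : Equiv.Perm (Fin (n+2)) // ∀ x, Even (minimalPeriod ⇑σ x)} →
      ({x : Fin (n+2) // x ≠ a} × {x : Fin (n+2) // x ≠ a}) := fun s =>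
    (⟨s.1 a, apply_ne_self s.2 a⟩, ⟨s.1⁻¹ a, hinvne s.1 s.2⟩)
  have hcardB : Fintype.card {x : Fin (n+2) // x ≠ a} = n + 1 := by
    have h1 : {x : Fin (n+2) // x ≠ a} ≃ {x : Fin (n+2) // ¬ (x = a)} :=
      Equiv.subtypeEquivRight (by intro x; simp)
    rw [Fintype.card_congr h1, Fintype.card_subtype_compl, Fintype.card_subtype_eq,
      Fintype.card_fin]
    omega
  have key : ∀ bc : ({x : Fin (n+2) // x ≠ a} × {x : Fin (n+2) // x ≠ a}),
      Nat.card {s : {σ : Equiv.Perm (Fin (n+2)) // ∀ x, Even (minimalPeriod ⇑σ x)} // g s = bc}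
      = Nat.card {σ : Equiv.Perm (Fin n) // ∀ x, Even (minimalPeriod ⇑σ x)} := by
    rintro ⟨b, c⟩
    have hiff : ∀ s : {σ : Equiv.Perm (Fin (n+2)) // ∀ x, Even (minimalPeriod ⇑σ x)},
        g s = (b, c) ↔ ((s : Equiv.Perm (Fin (n+2))) a = ↑b ∧ (s : Equiv.Perm (Fin (n+2))) ↑c = a) := by
      intro s
      rw [Prod.ext_iff, Subtype.ext_iff, Subtype.ext_iff]
      constructor
      · rintro ⟨h1, h2⟩
        refine ⟨h1, ?_⟩
        show (s : Equiv.Perm (Fin (n+2))) ((c : Fin (n+2))) = a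
        rw [← h2]
        show (s : Equiv.Perm (Fin (n+2))) ((s : Equiv.Perm (Fin (n+2)))⁻¹ a) = a
        rw [← Equiv.Perm.mul_apply, mul_inv_cancel, Equiv.Perm.one_apply]
      · rintro ⟨h1, h2⟩
        refine ⟨h1, ?_⟩
        show (s : Equiv.Perm (Fin (n+2)))⁻¹ a = ↑c
        rw [Equiv.Perm.inv_eq_iff_eq]
        exact h2.symm
    have e1 : {s : {σ : Equiv.Perm (Fin (n+2)) // ∀ x, Even (minimalPeriod ⇑σ x)} // g s = (b, c)} ≃
        {σ : Equiv.Perm (Fin (n+2)) //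
          (∀ x, Even (minimalPeriod ⇑σ x)) ∧ σ a = ↑b ∧ σ ↑c = a} :=
      (Equiv.subtypeEquivRight hiff).trans
        (Equiv.subtypeSubtypeEquivSubtypeInter
          (fun σ : Equiv.Perm (Fin (n+2)) => ∀ x, Even (minimalPeriod ⇑σ x))
          (fun σ => σ a = ↑b ∧ σ ↑c = a))
    have e2 := fibEquiv (a := a) b.2 c.2
    have hcard2 : Fintype.card {x : Fin (n+2) // x ≠ a ∧ x ≠ ↑b} = n := by
      have h1 : {x : Fin (n+2) // x ≠ a ∧ x ≠ ↑b} ≃ {x : Fin (n+2) // ¬ (x = a ∨ x = ↑b)} :=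
        Equiv.subtypeEquivRight (by intro x; simp [not_or])
      rw [Fintype.card_congr h1, Fintype.card_subtype_compl, Fintype.card_fin]
      have hfil : Finset.filter (fun x => x = a ∨ x = ↑b) Finset.univ = {a, ↑b} := by
        ext x; simp
      rw [Fintype.card_subtype, hfil,
        Finset.card_insert_of_notMem (by simp only [Finset.mem_singleton]; exact fun h => b.2 h.symm),
        Finset.card_singleton]
      omega
    have e3 := Fintype.equivFinOfCardEq hcard2
    calc Nat.card {s : {σ : Equiv.Perm (Fin (n+2)) // ∀ x, Even (minimalPeriod ⇑σ x)} // g s = (b, c)}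
        = Nat.card {σ : Equiv.Perm (Fin (n+2)) //
            (∀ x, Even (minimalPeriod ⇑σ x)) ∧ σ a = ↑b ∧ σ ↑c = a} := Nat.card_congr e1
      _ = Nat.card {ρ : Equiv.Perm {x : Fin (n+2) // x ≠ a ∧ x ≠ ↑b} //
            ∀ y, Even (minimalPeriod ⇑ρ y)} := Nat.card_congr e2
      _ = Nat.card {σ : Equiv.Perm (Fin n) // ∀ x, Even (minimalPeriod ⇑σ x)} :=
            card_AE_congr e3
  have hsum : Nat.card {σ : Equiv.Perm (Fin (n+2)) // ∀ x, Even (minimalPeriod ⇑σ x)}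
      = ∑ bc : ({x : Fin (n+2) // x ≠ a} × {x : Fin (n+2) // x ≠ a}),
          Nat.card {s : {σ : Equiv.Perm (Fin (n+2)) // ∀ x, Even (minimalPeriod ⇑σ x)} // g s = bc} := by
    rw [← Nat.card_congr (Equiv.sigmaFiberEquiv g)]
    rw [Nat.card_eq_fintype_card, Fintype.card_sigma]
    refine Finset.sum_congr rfl (fun bc _ => ?_)
    rw [Nat.card_eq_fintype_card]
  rw [hsum, Finset.sum_congr rfl (fun bc _ => key bc), Finset.sum_const, smul_eq_mul]
  congr 1
  rw [Finset.card_univ, Fintype.card_prod, hcardB, sq]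

theorem card_zero : Nat.card {σ : Equiv.Perm (Fin 0) // ∀ x, Even (minimalPeriod ⇑σ x)} = 1 := by
  rw [Nat.card_eq_one_iff_unique]
  constructor
  · constructor
    rintro ⟨σ, _⟩ ⟨τ, _⟩
    apply Subtype.ext
    apply Equiv.ext
    intro x
    exact x.elim0
  · exact ⟨⟨1, fun x => x.elim0⟩⟩

theorem main_aux (m : ℕ) :
    (Nat.card {σ : Equiv.Perm (Fin (2*m)) // ∀ x, Even (minimalPeriod ⇑σ x)} : ℚ)
      = ((2*m)! : ℚ) * ((2:ℚ)^(2*m))⁻¹ * ((2*m).choose m) := by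
  induction m with
  | zero =>
      rw [show (2*0) = 0 by norm_num, card_zero]
      norm_num
  | succ m ih =>
      have h1 : 2 * (m+1) = (2*m) + 2 := by ring
      rw [h1, card_rec (2*m)]
      push_cast
      rw [ih]
      have i1 : (2*m+2) * ((2*m+1).choose m) = (2*m+2).choose (m+1) * (m+1) :=
        Nat.add_one_mul_choose_eq (2*m+1) m
      have i2 : (2*m+1) * ((2*m).choose m) = (2*m+1).choose (m+1) * (m+1) :=
        Nat.add_one_mul_choose_eq (2*m) m
      have i3 : (2*m+1).choose (m+1) = (2*m+1).choose m := by
        have h := Nat.choose_symm (show m ≤ 2*m+1 by omega)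
        rw [show 2*m+1-m = m+1 by omega] at h
        exact h
      have h2 : (m+1) * (m+1) * ((2*m+2).choose (m+1))
          = (2*m+2) * ((2*m+1) * ((2*m).choose m)) := by
        calc (m+1)*(m+1)*((2*m+2).choose (m+1))
            = ((2*m+2).choose (m+1) * (m+1)) * (m+1) := by ring
          _ = ((2*m+2) * ((2*m+1).choose m)) * (m+1) := by rw [← i1]
          _ = (2*m+2) * ((2*m+1).choose (m+1) * (m+1)) := by rw [i3]; ring
          _ = (2*m+2) * ((2*m+1) * ((2*m).choose m)) := by rw [← i2]
      have hch : ((m:ℚ)+1) * ((m:ℚ)+1) * (((2*m+2).choose (m+1) : ℕ) : ℚ)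
          = (2*(m:ℚ)+2) * ((2*(m:ℚ)+1) * (((2*m).choose m : ℕ) : ℚ)) := by
        exact_mod_cast congrArg (fun t : ℕ => (t : ℚ)) h2
      have hfac : (((2*m+2)! : ℕ) : ℚ) = (2*(m:ℚ)+2) * (2*(m:ℚ)+1) * (((2*m)! : ℕ) : ℚ) := by
        have : (2*m+2)! = (2*m+2) * ((2*m+1) * (2*m)!) := by
          rw [show (2*m+2) = (2*m+1)+1 from rfl, Nat.factorial_succ, Nat.factorial_succ]
        rw [this]
        push_cast
        ring
      have hm1 : ((m:ℚ)+1) ≠ 0 := by positivity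
      have hpow : ((2:ℚ)^(2*m)) ≠ 0 := by positivity
      have hch' : (((2*m+2).choose (m+1) : ℕ) : ℚ)
          = (2*(m:ℚ)+2) * (2*(m:ℚ)+1) * (((2*m).choose m : ℕ) : ℚ) / (((m:ℚ)+1) * ((m:ℚ)+1)) := by
        rw [eq_div_iff (mul_ne_zero hm1 hm1)]
        linear_combination hch
      rw [hfac, hch', pow_add]
      field_simp
end EvenCycleAux

open EvenCycleAux in
/-- For even positive `N`, the number of permutations of `[N]` all of whose cycle
lengths are even equals `N! · 2^{-N} · C(N, N/2)`. -/
theorem numEvenCyclePerms (N : ℕ) (hN : 0 < N) (hNe : Even N) :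
    (Nat.card {σ : Equiv.Perm (Fin N) //
        ∀ x : Fin N, Even (Function.minimalPeriod σ x)} : ℚ)
      = (N ! : ℚ) * ((2 : ℚ) ^ N)⁻¹ * (N.choose (N / 2)) := by
  obtain ⟨m, hm⟩ := hNe
  have h2m : N = 2 * m := by omega
  subst h2m
  rw [show (2*m)/2 = m from by omega]
  exact main_aux m
end

section
/- For odd N, the number of permutations of [N] all of whose cycle lengths are odd equals N! · 2^{-N+1} · binomial(N-1, (N-1)/2). -/
open Nat Function Equiv

section OddPerms

variable {β γ : Type*}

def AllOdd (σ : Equiv.Perm β) : Prop := ∀ x, Odd (Function.minimalPeriod σ x)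

lemma perm_mem_periodicPts [Finite β] (σ : Equiv.Perm β) (x : β) :
    x ∈ periodicPts ⇑σ := by
  refine mk_mem_periodicPts (orderOf_pos σ) ?_
  have : IsPeriodicPt ⇑σ (orderOf σ) x ↔ (σ ^ orderOf σ) x = x := by
    rw [IsPeriodicPt, IsFixedPt, Equiv.Perm.iterate_eq_pow]
  rw [this, pow_orderOf_eq_one]
  rfl

lemma perm_minimalPeriod_pos [Finite β] (σ : Equiv.Perm β) (x : β) :
    0 < minimalPeriod ⇑σ x :=
  minimalPeriod_pos_of_mem_periodicPts (perm_mem_periodicPts σ x)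

lemma iterate_congr_of_orbit {f g : β → β} {x : β}
    (h : ∀ k, g (f^[k] x) = f (f^[k] x)) : ∀ n, g^[n] x = f^[n] x := by
  intro n
  induction n with
  | zero => rfl
  | succ n ih =>
    rw [Function.iterate_succ_apply', Function.iterate_succ_apply', ih, h n]

lemma minimalPeriod_congr_of_orbit {f g : β → β} {x : β}
    (h : ∀ k, g (f^[k] x) = f (f^[k] x)) :
    minimalPeriod g x = minimalPeriod f x := by
  rw [minimalPeriod_eq_minimalPeriod_iff]
  intro n
  unfold IsPeriodicPt IsFixedPt
  rw [iterate_congr_of_orbit h]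

lemma splice_apply_a [DecidableEq β] (g : Equiv.Perm β) (u v a : β)
    (hgv : g v = v) :
    (g * Equiv.swap u v * Equiv.swap u a) a = v := by
  rw [Equiv.Perm.mul_apply, Equiv.Perm.mul_apply, Equiv.swap_apply_right,
    Equiv.swap_apply_left, hgv]

lemma splice_apply_v [DecidableEq β] (g : Equiv.Perm β) (u v a : β)
    (hgu : g u = u) (huv : u ≠ v) (hav : a ≠ v) :
    (g * Equiv.swap u v * Equiv.swap u a) v = u := by
  rw [Equiv.Perm.mul_apply, Equiv.Perm.mul_apply,
    Equiv.swap_apply_of_ne_of_ne (Ne.symm huv) (Ne.symm hav),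
    Equiv.swap_apply_right, hgu]

lemma splice_apply_u [DecidableEq β] (g : Equiv.Perm β) (u v a : β)
    (hau : a ≠ u) (hav : a ≠ v) :
    (g * Equiv.swap u v * Equiv.swap u a) u = g a := by
  rw [Equiv.Perm.mul_apply, Equiv.Perm.mul_apply, Equiv.swap_apply_left,
    Equiv.swap_apply_of_ne_of_ne hau hav]

lemma splice_apply_other [DecidableEq β] (g : Equiv.Perm β) (u v a : β)
    {x : β} (hxu : x ≠ u) (hxv : x ≠ v) (hxa : x ≠ a) :
    (g * Equiv.swap u v * Equiv.swap u a) x = g x := by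
  rw [Equiv.Perm.mul_apply, Equiv.Perm.mul_apply,
    Equiv.swap_apply_of_ne_of_ne hxu hxa, Equiv.swap_apply_of_ne_of_ne hxu hxv]

/-- The key surgery lemma: splicing the chain `a → v → u → g a` into the cycle of `a`
(where `u, v` were fixed points of `g`) preserves the all-odd-cycles property. -/
lemma allOdd_splice [Finite β] [DecidableEq β] (g : Equiv.Perm β) (u v a : β)
    (hgu : g u = u) (hgv : g v = v) (huv : u ≠ v) (hau : a ≠ u) (hav : a ≠ v) :
    AllOdd (g * Equiv.swap u v * Equiv.swap u a) ↔ AllOdd g := by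
  classical
  set σ : Equiv.Perm β := g * Equiv.swap u v * Equiv.swap u a with hσ
  set m : ℕ := minimalPeriod ⇑g a with hmdef
  have hm : 0 < m := perm_minimalPeriod_pos g a
  have hgm : (⇑g)^[m] a = a := iterate_minimalPeriod
  have fixu : ∀ k : ℕ, (⇑g)^[k] u = u := fun k => (IsFixedPt.iterate hgu k)
  have fixv : ∀ k : ℕ, (⇑g)^[k] v = v := fun k => (IsFixedPt.iterate hgv k)
  -- points on the g-orbit of a, strictly between, avoid u, v, a
  have orbit_ne : ∀ k : ℕ, 1 ≤ k → k < m →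
      (⇑g)^[k] a ≠ u ∧ (⇑g)^[k] a ≠ v ∧ (⇑g)^[k] a ≠ a := by
    intro k h1 h2
    refine ⟨?_, ?_, ?_⟩
    · intro h
      apply hau
      calc a = (⇑g)^[m] a := hgm.symm
        _ = (⇑g)^[m - k] ((⇑g)^[k] a) := by
            rw [← Function.iterate_add_apply, Nat.sub_add_cancel h2.le]
        _ = u := by rw [h, fixu]
    · intro h
      apply hav
      calc a = (⇑g)^[m] a := hgm.symm
        _ = (⇑g)^[m - k] ((⇑g)^[k] a) := by
            rw [← Function.iterate_add_apply, Nat.sub_add_cancel h2.le]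
        _ = v := by rw [h, fixv]
    · intro h
      have : m ≤ k := IsPeriodicPt.minimalPeriod_le h1 h
      omega
  have sa : σ a = v := splice_apply_a g u v a hgv
  have sv : σ v = u := splice_apply_v g u v a hgu huv hav
  have su : σ u = g a := splice_apply_u g u v a hau hav
  -- trajectory of v under σ
  have traj : ∀ k : ℕ, 1 ≤ k → k ≤ m → (⇑σ)^[k + 1] v = (⇑g)^[k] a := by
    intro k
    induction k with
    | zero => omega
    | succ n ih =>
      intro _ h2
      rcases Nat.eq_zero_or_pos n with hn | hn
      · subst hn
        have h2step : (⇑σ)^[(0:ℕ) + 1 + 1] v = σ (σ v) := rfl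
        rw [h2step, sv, su, Function.iterate_one]
      · have h2' : n < m := by omega
        have ihh := ih hn h2'.le
        rw [Function.iterate_succ_apply' (f := ⇑σ) (n := n + 1), ihh,
          Function.iterate_succ_apply' (f := ⇑g)]
        obtain ⟨h1, h2'', h3⟩ := orbit_ne n hn h2'
        exact splice_apply_other g u v a h1 h2'' h3
  have hperiodic : (⇑σ)^[m + 2] v = v := by
    have h1 : (⇑σ)^[m + 1] v = a := by rw [traj m hm le_rfl, hgm]
    rw [show m + 2 = (m + 1) + 1 from rfl, Function.iterate_succ_apply', h1, sa]
  have hne : ∀ k : ℕ, 1 ≤ k → k ≤ m + 1 → (⇑σ)^[k] v ≠ v := by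
    intro k h1 h2
    rcases Nat.eq_or_lt_of_le h1 with h | h
    · rw [← h, Function.iterate_one, sv]; exact huv
    · have hk : k = (k - 1) + 1 := by omega
      have h1' : 1 ≤ k - 1 := by omega
      have h2' : k - 1 ≤ m := by omega
      rw [hk, traj (k - 1) h1' h2']
      rcases Nat.eq_or_lt_of_le h2' with he | hl
      · rw [he, hgm]; exact hav
      · exact (orbit_ne (k - 1) h1' hl).2.1
  have per_v : minimalPeriod ⇑σ v = m + 2 := by
    have hper : IsPeriodicPt ⇑σ (m + 2) v := hperiodic
    have hle : minimalPeriod ⇑σ v ≤ m + 2 := hper.minimalPeriod_le (by omega)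
    have hpos : 0 < minimalPeriod ⇑σ v := perm_minimalPeriod_pos σ v
    by_contra hc
    have hlt : minimalPeriod ⇑σ v ≤ m + 1 := by omega
    exact hne _ hpos hlt (iterate_minimalPeriod)
  -- all points on the (σ-)cycle of v have σ-period m+2
  have per_orbit : ∀ k : ℕ, minimalPeriod ⇑σ ((⇑g)^[k] a) = m + 2 := by
    intro k
    have hmod : (⇑g)^[k] a = (⇑g)^[k % m] a := (iterate_mod_minimalPeriod_eq).symm
    rcases Nat.eq_zero_or_pos (k % m) with h0 | hp
    · rw [hmod, h0]
      have : (⇑g)^[0] a = (⇑σ)^[m + 1] v := by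
        rw [traj m hm le_rfl, hgm]; rfl
      rw [this, minimalPeriod_apply_iterate (perm_mem_periodicPts σ v), per_v]
    · have hlt : k % m < m := Nat.mod_lt _ hm
      rw [hmod, ← traj (k % m) hp hlt.le,
        minimalPeriod_apply_iterate (perm_mem_periodicPts σ v), per_v]
  have per_g_orbit : ∀ k : ℕ, minimalPeriod ⇑g ((⇑g)^[k] a) = m :=
    fun k => minimalPeriod_apply_iterate (perm_mem_periodicPts g a) k
  -- points away from u, v and the cycle of a : periods agree
  have other : ∀ x : β, x ≠ u → x ≠ v → (∀ k : ℕ, (⇑g)^[k] a ≠ x) →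
      minimalPeriod ⇑σ x = minimalPeriod ⇑g x := by
    intro x hxu hxv hxa
    have key : ∀ k : ℕ, (⇑g)^[k] x ≠ u ∧ (⇑g)^[k] x ≠ v ∧ (⇑g)^[k] x ≠ a := by
      intro k
      have hp : 0 < minimalPeriod ⇑g x := perm_minimalPeriod_pos g x
      set p := minimalPeriod ⇑g x with hpdef
      have hN : (⇑g)^[p * (k + 1)] x = x :=
        (isPeriodicPt_minimalPeriod ⇑g x).mul_const (k + 1)
      have hkN : k ≤ p * (k + 1) := by nlinarith
      have hsplit : ∀ y : β, (⇑g)^[k] x = y → x = (⇑g)^[p * (k + 1) - k] y := by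
        intro y hy
        rw [← hy, ← Function.iterate_add_apply, Nat.sub_add_cancel hkN, hN]
      refine ⟨fun h => hxu ?_, fun h => hxv ?_, fun h => hxa _ (hsplit a h).symm⟩
      · rw [hsplit u h, fixu]
      · rw [hsplit v h, fixv]
    refine minimalPeriod_congr_of_orbit fun k => ?_
    obtain ⟨h1, h2, h3⟩ := key k
    exact splice_apply_other g u v a h1 h2 h3
  constructor
  · -- AllOdd σ → AllOdd g
    intro H x
    by_cases hxu : x = u
    · rw [hxu, minimalPeriod_eq_one_iff_isFixedPt.mpr hgu]; exact odd_one
    by_cases hxv : x = v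
    · rw [hxv, minimalPeriod_eq_one_iff_isFixedPt.mpr hgv]; exact odd_one
    by_cases hxa : ∃ k : ℕ, (⇑g)^[k] a = x
    · obtain ⟨k, hk⟩ := hxa
      rw [← hk, per_g_orbit]
      have hodd : Odd (m + 2) := by rw [← per_v]; exact H v
      rw [Nat.odd_iff] at hodd ⊢
      omega
    · push_neg at hxa
      rw [← other x hxu hxv hxa]
      exact H x
  · -- AllOdd g → AllOdd σ
    intro H x
    by_cases hxu : x = u
    · have hu2 : minimalPeriod ⇑σ u = m + 2 := by
        have h1 : u = (⇑σ)^[1] v := by rw [Function.iterate_one, sv]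
        rw [h1, minimalPeriod_apply_iterate (perm_mem_periodicPts σ v), per_v]
      rw [hxu, hu2]
      have hodd : Odd m := H a
      rw [Nat.odd_iff] at hodd ⊢; omega
    by_cases hxv : x = v
    · rw [hxv, per_v]
      have hodd : Odd m := H a
      rw [Nat.odd_iff] at hodd ⊢; omega
    by_cases hxa : ∃ k : ℕ, (⇑g)^[k] a = x
    · obtain ⟨k, hk⟩ := hxa
      rw [← hk, per_orbit]
      have hodd : Odd m := H a
      rw [Nat.odd_iff] at hodd ⊢; omega
    · push_neg at hxa
      rw [other x hxu hxv hxa]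
      exact H x

lemma minimalPeriod_permCongr (h : β ≃ γ) (f : Equiv.Perm β) (x : β) :
    minimalPeriod ⇑(h.permCongr f) (h x) = minimalPeriod ⇑f x := by
  have key : ∀ n : ℕ, (⇑(h.permCongr f))^[n] (h x) = h ((⇑f)^[n] x) := by
    intro n
    induction n with
    | zero => rfl
    | succ n ih =>
      rw [Function.iterate_succ_apply', Function.iterate_succ_apply', ih]
      simp [Equiv.permCongr_apply]
  rw [minimalPeriod_eq_minimalPeriod_iff]
  intro n
  unfold IsPeriodicPt IsFixedPt
  rw [key n, h.apply_eq_iff_eq]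

lemma allOdd_permCongr_iff (h : β ≃ γ) (f : Equiv.Perm β) :
    AllOdd (h.permCongr f) ↔ AllOdd f := by
  constructor
  · intro H x
    have := H (h x)
    rwa [minimalPeriod_permCongr] at this
  · intro H y
    have := minimalPeriod_permCongr h f (h.symm y)
    rw [h.apply_symm_apply] at this
    rw [this]
    exact H _

lemma card_allOdd_congr (h : β ≃ γ) :
    Nat.card {σ : Equiv.Perm β // AllOdd σ} = Nat.card {σ : Equiv.Perm γ // AllOdd σ} :=
  Nat.card_congr <| Equiv.subtypeEquiv h.permCongr fun f => (allOdd_permCongr_iff h f).symm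

lemma optionCongr_iterate (e : Equiv.Perm γ) (n : ℕ) (x : γ) :
    (⇑e.optionCongr)^[n] (some x) = some ((⇑e)^[n] x) := by
  induction n with
  | zero => rfl
  | succ n ih =>
    rw [Function.iterate_succ_apply', Function.iterate_succ_apply', ih]
    simp

lemma minimalPeriod_optionCongr_some (e : Equiv.Perm γ) (x : γ) :
    minimalPeriod ⇑e.optionCongr (some x) = minimalPeriod ⇑e x := by
  rw [minimalPeriod_eq_minimalPeriod_iff]
  intro n
  unfold IsPeriodicPt IsFixedPt
  rw [optionCongr_iterate]
  simp

lemma allOdd_optionCongr_iff (e : Equiv.Perm γ) :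
    AllOdd e.optionCongr ↔ AllOdd e := by
  constructor
  · intro H x
    have := H (some x)
    rwa [minimalPeriod_optionCongr_some] at this
  · intro H x
    match x with
    | none =>
      have h1 : minimalPeriod ⇑e.optionCongr none = 1 :=
        minimalPeriod_eq_one_iff_isFixedPt.mpr (by simp [IsFixedPt])
      rw [h1]; exact odd_one
    | some y => rw [minimalPeriod_optionCongr_some]; exact H y

section OptionStuff

variable {α : Type*} [DecidableEq α]

lemma optionCongr_removeNone_of_fix (σ : Equiv.Perm (Option α)) (h : σ none = none) :
    (Equiv.removeNone σ).optionCongr = σ := by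
  rw [map_equiv_removeNone, h, Equiv.swap_self]
  show (1 : Equiv.Perm (Option α)) * σ = σ
  rw [one_mul]

lemma removeNone_optionCongr'' (e : Equiv.Perm α) :
    Equiv.removeNone e.optionCongr = e := by
  apply Equiv.optionCongr_injective
  apply optionCongr_removeNone_of_fix
  simp

/-- Permutations of `Option α` fixing `none` with all cycles odd correspond to
all-odd permutations of `α`. -/
def fixNoneEquiv : {σ : Equiv.Perm (Option α) // AllOdd σ ∧ σ none = none} ≃
    {e : Equiv.Perm α // AllOdd e} where
  toFun σ := ⟨Equiv.removeNone σ.1, by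
    have h := optionCongr_removeNone_of_fix σ.1 σ.2.2
    rw [← allOdd_optionCongr_iff, h]
    exact σ.2.1⟩
  invFun e := ⟨e.1.optionCongr, (allOdd_optionCongr_iff e.1).mpr e.2, by simp⟩
  left_inv σ := Subtype.ext (optionCongr_removeNone_of_fix σ.1 σ.2.2)
  right_inv e := Subtype.ext (removeNone_optionCongr'' e.1)

end OptionStuff

section Branch2

variable {α : Type*} [Fintype α] [DecidableEq α]

/-- The data parametrizing all-odd permutations of `Option α` not fixing `none`. -/
def OddSig (α : Type*) [DecidableEq α] : Type _ :=
  Σ i : α, ({j : α // j ≠ i} × {τ : Equiv.Perm α // τ i = i ∧ AllOdd τ})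

def phi (s : OddSig α) : {σ : Equiv.Perm (Option α) // AllOdd σ ∧ σ none ≠ none} := by
  obtain ⟨i, ⟨j, hj⟩, ⟨τ, hτi, hτodd⟩⟩ := s
  have hav : (some (τ⁻¹ j) : Option α) ≠ some i := by
    simp only [ne_eq, Option.some.injEq]
    intro h
    apply hj
    rw [← hτi, ← h, Equiv.Perm.inv_def, Equiv.apply_symm_apply]
  have hgv : τ.optionCongr (some i) = some i := by simp [hτi]
  have hgu : τ.optionCongr none = none := by simp
  refine ⟨τ.optionCongr * Equiv.swap none (some i) * Equiv.swap none (some (τ⁻¹ j)),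
    ?_, ?_⟩
  · rw [allOdd_splice _ _ _ _ hgu hgv (by simp) (by simp) hav]
    exact (allOdd_optionCongr_iff τ).mpr hτodd
  · rw [splice_apply_u _ _ _ _ (by simp) hav]
    simp

lemma phi_injective : Function.Injective (phi (α := α)) := by
  rintro ⟨i, ⟨j, hj⟩, ⟨τ, hτi, hτodd⟩⟩ ⟨i', ⟨j', hj'⟩, ⟨τ', hτi', hτodd'⟩⟩ h
  rw [Subtype.ext_iff] at h
  simp only [phi] at h
  set u : Option α := none
  have hav : (some (τ⁻¹ j) : Option α) ≠ some i := by
    simp only [ne_eq, Option.some.injEq]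
    intro hx; apply hj; rw [← hτi, ← hx, Equiv.Perm.inv_def, Equiv.apply_symm_apply]
  have hav' : (some (τ'⁻¹ j') : Option α) ≠ some i' := by
    simp only [ne_eq, Option.some.injEq]
    intro hx; apply hj'; rw [← hτi', ← hx, Equiv.Perm.inv_def, Equiv.apply_symm_apply]
  set σ := τ.optionCongr * Equiv.swap u (some i) * Equiv.swap u (some (τ⁻¹ j)) with hσ
  set σ' := τ'.optionCongr * Equiv.swap u (some i') * Equiv.swap u (some (τ'⁻¹ j')) with hσ'
  have hgv : τ.optionCongr (some i) = some i := by simp [hτi]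
  have hgv' : τ'.optionCongr (some i') = some i' := by simp [hτi']
  -- recover i
  have hvi : σ (some i) = none := splice_apply_v _ _ _ _ rfl (by simp) hav
  have hvi' : σ' (some i') = none := splice_apply_v _ _ _ _ rfl (by simp) hav'
  have hii : i = i' := by
    have : σ (some i) = σ (some i') := by rw [hvi, h, hvi']
    exact Option.some.inj (σ.injective this)
  subst hii
  -- recover j
  have hui : σ none = some j := by
    rw [splice_apply_u _ _ _ _ (by simp) hav]; simp
  have hui' : σ' none = some j' := by
    rw [splice_apply_u _ _ _ _ (by simp) hav']; simp
  have hjj : j = j' := by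
    have := hui.symm.trans (by rw [h, hui'])
    exact Option.some.inj this
  subst hjj
  -- recover a and τ
  have hai : σ (some (τ⁻¹ j)) = some i := splice_apply_a _ _ _ _ hgv
  have hai' : σ' (some (τ'⁻¹ j)) = some i := splice_apply_a _ _ _ _ hgv'
  have haa : (some (τ⁻¹ j) : Option α) = some (τ'⁻¹ j) := by
    apply σ.injective
    rw [hai, h, hai']
  have hττ : τ = τ' := by
    apply Equiv.optionCongr_injective
    have h1 : τ.optionCongr = σ * Equiv.swap u (some (τ⁻¹ j)) * Equiv.swap u (some i) := by
      rw [hσ]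
      simp [Equiv.swap_mul_self, mul_assoc]
    have h2 : τ'.optionCongr = σ' * Equiv.swap u (some (τ'⁻¹ j)) * Equiv.swap u (some i) := by
      rw [hσ']
      simp [Equiv.swap_mul_self, mul_assoc]
    rw [h1, h2, h, haa]
  subst hττ
  rfl

end Branch2

section Branch2b

variable {α : Type*} [Fintype α] [DecidableEq α]

lemma phi_surjective : Function.Surjective (phi (α := α)) := by
  rintro ⟨σ, hodd, hne⟩
  -- identify i and j
  have hvne : σ⁻¹ none ≠ none := by
    intro h
    have h2 := congrArg σ h
    rw [Equiv.Perm.inv_def, Equiv.apply_symm_apply] at h2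
    exact hne h2.symm
  obtain ⟨i, hi⟩ : ∃ i, σ⁻¹ none = some i := Option.ne_none_iff_exists'.mp hvne
  obtain ⟨j, hjdef⟩ : ∃ j, σ none = some j := Option.ne_none_iff_exists'.mp hne
  have hσi : σ (some i) = none := by rw [← hi, Equiv.Perm.inv_def, Equiv.apply_symm_apply]
  have hij : i ≠ j := by
    intro h
    subst h
    have h2 : IsPeriodicPt ⇑σ 2 none := by
      show σ (σ none) = none
      rw [hjdef, hσi]
    have hdvd : minimalPeriod ⇑σ none ∣ 2 := h2.minimalPeriod_dvd
    have hoddn := hodd none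
    have h1 : minimalPeriod ⇑σ none = 1 := by
      rcases (Nat.dvd_prime Nat.prime_two).mp hdvd with h | h
      · exact h
      · rw [h] at hoddn; exact absurd hoddn (by decide)
    apply hne
    exact minimalPeriod_eq_one_iff_isFixedPt.mp h1
  -- the point a
  set v : Option α := some i with hv
  set a : Option α := σ⁻¹ v with ha
  have hσa : σ a = v := Equiv.apply_symm_apply σ v
  have hau : a ≠ none := by
    intro h
    rw [h] at hσa
    rw [hjdef] at hσa
    exact hij (Option.some.inj hσa).symm
  have hav : a ≠ v := by
    intro h
    rw [h] at hσa
    have : σ v = none := hσi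
    rw [this] at hσa
    exact absurd (hσa.trans hv) (by simp)
  -- the reduced permutation
  set g : Equiv.Perm (Option α) := σ * Equiv.swap none a * Equiv.swap none v with hg
  have hgu : g none = none := by
    have h1 : Equiv.swap (none : Option α) v none = v := Equiv.swap_apply_left _ _
    have h2 : Equiv.swap (none : Option α) a v = v :=
      Equiv.swap_apply_of_ne_of_ne (by simp [hv]) (Ne.symm hav)
    simp only [hg, Equiv.Perm.mul_apply, h1, h2, hσi]
  have hgv : g v = v := by
    have h1 : Equiv.swap (none : Option α) v v = none := Equiv.swap_apply_right _ _
    have h2 : Equiv.swap (none : Option α) a none = a := Equiv.swap_apply_left _ _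
    simp only [hg, Equiv.Perm.mul_apply, h1, h2, hσa]
  have hσg : σ = g * Equiv.swap none v * Equiv.swap none a := by
    rw [hg]
    simp [Equiv.swap_mul_self, mul_assoc]
  have hgodd : AllOdd g := by
    rw [← allOdd_splice g none v a hgu hgv (by simp [hv]) hau hav, ← hσg]
    exact hodd
  -- extract τ
  set τ : Equiv.Perm α := Equiv.removeNone g with hτ
  have hgτ : τ.optionCongr = g := optionCongr_removeNone_of_fix g hgu
  have hτi : τ i = i := by
    have : τ.optionCongr (some i) = some (τ i) := by simp
    rw [hgτ] at this
    have h2 : g v = some (τ i) := this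
    rw [hgv] at h2
    exact (Option.some.inj h2).symm
  have hτodd : AllOdd τ := by
    rw [← allOdd_optionCongr_iff, hgτ]
    exact hgodd
  -- identify a with some (τ⁻¹ j)
  have hga : g a = some j := by
    have h1 : Equiv.swap (none : Option α) v a = a :=
      Equiv.swap_apply_of_ne_of_ne hau hav
    have h2 : Equiv.swap (none : Option α) a a = none := Equiv.swap_apply_right _ _
    simp only [hg, Equiv.Perm.mul_apply, h1, h2, hjdef]
  have haτ : a = some (τ⁻¹ j) := by
    apply g.injective
    rw [hga, ← hgτ]
    simp
  refine ⟨⟨i, ⟨j, hij.symm⟩, ⟨τ, hτi, hτodd⟩⟩, ?_⟩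
  apply Subtype.ext
  show τ.optionCongr * Equiv.swap none (some i) * Equiv.swap none (some (τ⁻¹ j)) = σ
  rw [hgτ, ← haτ, ← hv, ← hσg]

end Branch2b

section Counting

/-- The number of permutations of `Fin n` all of whose cycles are odd. -/
noncomputable def oddCount (n : ℕ) : ℕ := Nat.card {σ : Equiv.Perm (Fin n) // AllOdd σ}

variable {α : Type*} [Fintype α] [DecidableEq α]

lemma card_split :
    Nat.card {σ : Equiv.Perm (Option α) // AllOdd σ} =
      Nat.card {σ : Equiv.Perm (Option α) // AllOdd σ ∧ σ none = none} +
      Nat.card {σ : Equiv.Perm (Option α) // AllOdd σ ∧ σ none ≠ none} := by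
  classical
  have e1 : {σ : Equiv.Perm (Option α) // AllOdd σ} ≃
      {s : {σ : Equiv.Perm (Option α) // AllOdd σ} // s.1 none = none} ⊕
      {s : {σ : Equiv.Perm (Option α) // AllOdd σ} // ¬ s.1 none = none} :=
    (Equiv.sumCompl _).symm
  have e2 := Equiv.subtypeSubtypeEquivSubtypeInter
    (fun σ : Equiv.Perm (Option α) => AllOdd σ) (fun σ => σ none = none)
  have e3 := Equiv.subtypeSubtypeEquivSubtypeInter
    (fun σ : Equiv.Perm (Option α) => AllOdd σ) (fun σ => ¬ σ none = none)
  rw [Nat.card_congr e1, Nat.card_sum, Nat.card_congr e2, Nat.card_congr e3]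

lemma card_branch2_eq :
    Nat.card {σ : Equiv.Perm (Option α) // AllOdd σ ∧ σ none ≠ none} =
      Nat.card (OddSig α) :=
  (Nat.card_eq_of_bijective phi ⟨phi_injective, phi_surjective⟩).symm

end Counting

section CountFin

lemma fix_count (n : ℕ) (i : Fin (n + 1)) :
    Nat.card {τ : Equiv.Perm (Fin (n + 1)) // τ i = i ∧ AllOdd τ} = oddCount n := by
  classical
  have h : Fin (n + 1) ≃ Option (Fin n) := finSuccEquiv' i
  have e1 : {τ : Equiv.Perm (Fin (n + 1)) // τ i = i ∧ AllOdd τ} ≃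
      {σ : Equiv.Perm (Option (Fin n)) // AllOdd σ ∧ σ none = none} := by
    refine Equiv.subtypeEquiv (finSuccEquiv' i).permCongr fun τ => ?_
    have hfix : ((finSuccEquiv' i).permCongr τ) none = none ↔ τ i = i := by
      rw [Equiv.permCongr_apply, finSuccEquiv'_symm_none]
      rw [show (none : Option (Fin n)) = finSuccEquiv' i i from (finSuccEquiv'_at i).symm]
      exact (finSuccEquiv' i).apply_eq_iff_eq
    rw [allOdd_permCongr_iff]
    tauto
  rw [Nat.card_congr e1, Nat.card_congr (fixNoneEquiv)]
  rfl

lemma card_oddSig (n : ℕ) :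
    Nat.card (OddSig (Fin (n + 1))) = (n + 1) * (n * oddCount n) := by
  classical
  have ecomp : ∀ i : Fin (n + 1),
      ({j : Fin (n + 1) // j ≠ i} × {τ : Equiv.Perm (Fin (n + 1)) // τ i = i ∧ AllOdd τ}) ≃
      (Fin n × {e : Equiv.Perm (Fin n) // AllOdd e}) := by
    intro i
    refine Equiv.prodCongr (finSuccAboveEquiv i).symm ?_
    have h1 : Nat.card {τ : Equiv.Perm (Fin (n + 1)) // τ i = i ∧ AllOdd τ} =
        Nat.card {e : Equiv.Perm (Fin n) // AllOdd e} := fix_count n i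
    -- we need an explicit equiv, so rebuild it as in fix_count
    refine (Equiv.subtypeEquiv (finSuccEquiv' i).permCongr fun τ => ?_).trans fixNoneEquiv
    have hfix : ((finSuccEquiv' i).permCongr τ) none = none ↔ τ i = i := by
      rw [Equiv.permCongr_apply, finSuccEquiv'_symm_none]
      rw [show (none : Option (Fin n)) = finSuccEquiv' i i from (finSuccEquiv'_at i).symm]
      exact (finSuccEquiv' i).apply_eq_iff_eq
    rw [allOdd_permCongr_iff]
    tauto
  have e : OddSig (Fin (n + 1)) ≃ Fin (n + 1) × (Fin n × {e : Equiv.Perm (Fin n) // AllOdd e}) :=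
    (Equiv.sigmaCongrRight ecomp).trans (Equiv.sigmaEquivProd _ _)
  rw [Nat.card_congr e, Nat.card_prod, Nat.card_prod, Nat.card_eq_fintype_card,
    Nat.card_eq_fintype_card, Fintype.card_fin, Fintype.card_fin]
  rfl

/-- The key recurrence. -/
lemma oddCount_rec (n : ℕ) :
    oddCount (n + 2) = oddCount (n + 1) + (n + 1) * (n * oddCount n) := by
  classical
  have h0 : oddCount (n + 2) =
      Nat.card {σ : Equiv.Perm (Option (Fin (n + 1))) // AllOdd σ} :=
    card_allOdd_congr (finSuccEquiv (n + 1))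
  rw [h0, card_split, card_branch2_eq, card_oddSig]
  congr 1
  rw [Nat.card_congr (fixNoneEquiv)]
  rfl

lemma oddCount_zero : oddCount 0 = 1 := by
  have h : ∀ σ : Equiv.Perm (Fin 0), AllOdd σ := fun σ x => x.elim0
  rw [oddCount, Nat.card_congr (Equiv.subtypeUnivEquiv h), Nat.card_eq_fintype_card]
  simp

lemma oddCount_one : oddCount 1 = 1 := by
  have h : ∀ σ : Equiv.Perm (Fin 1), AllOdd σ := by
    intro σ x
    have h1 : minimalPeriod ⇑σ x = 1 :=
      minimalPeriod_eq_one_iff_isFixedPt.mpr (Subsingleton.elim _ _)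
    rw [h1]; exact odd_one
  rw [oddCount, Nat.card_congr (Equiv.subtypeUnivEquiv h), Nat.card_eq_fintype_card]
  simp

end CountFin

lemma choose_key (k : ℕ) :
    ((2*k+2) : ℚ) * ((2*k+2).choose (k+1)) = 4 * (2*k+1) * ((2*k).choose k) := by
  have hA : ((2*k+2) : ℚ) * ((2*k+1).choose k) = ((2*k+2).choose (k+1)) * (k+1) := by
    exact_mod_cast congrArg (Nat.cast (R := ℚ)) (Nat.add_one_mul_choose_eq (2*k+1) k)
  have hB : ((2*k+1) : ℚ) * ((2*k).choose k) = ((2*k+1).choose (k+1)) * (k+1) := by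
    exact_mod_cast congrArg (Nat.cast (R := ℚ)) (Nat.add_one_mul_choose_eq (2*k) k)
  have hC : (((2*k+1).choose k : ℕ) : ℚ) = ((2*k+1).choose (k+1) : ℕ) := by
    have h := Nat.choose_symm (show k+1 ≤ 2*k+1 by omega)
    have h2 : 2*k+1 - (k+1) = k := by omega
    rw [h2] at h
    exact_mod_cast congrArg (Nat.cast (R := ℚ)) h
  have hk1 : ((k:ℚ)+1) ≠ 0 := by positivity
  have hKey2 : ((2*k+2) : ℚ) * ((2*k+2).choose (k+1)) * ((k:ℚ)+1)^2 =
      4 * (2*k+1) * ((2*k).choose k) * ((k:ℚ)+1)^2 := by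
    push_cast at hA hB hC ⊢
    linear_combination (-(((k:ℚ)+1)*(2*(k:ℚ)+2))) * hA + (((k:ℚ)+1)*(2*(k:ℚ)+2)^2) * hC + (-(4*((k:ℚ)+1)^2)) * hB
  have := mul_right_cancel₀ (pow_ne_zero 2 hk1) hKey2
  exact this

lemma oddCount_closed : ∀ k : ℕ,
    (oddCount (2*k) : ℚ) = ((2*k)! : ℚ) * ((4:ℚ)^k)⁻¹ * ((2*k).choose k) ∧
    (oddCount (2*k+1) : ℚ) = ((2*k+1)! : ℚ) * ((4:ℚ)^k)⁻¹ * ((2*k).choose k) := by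
  intro k
  induction k with
  | zero => norm_num [oddCount_zero, oddCount_one]
  | succ k ih =>
    obtain ⟨h0, h1⟩ := ih
    have hr1 : (oddCount (2*k+2) : ℚ)
        = oddCount (2*k+1) + ((2*k+1 : ℕ) : ℚ) * (((2*k : ℕ) : ℚ) * oddCount (2*k)) := by
      have h := oddCount_rec (2*k)
      push_cast [h]
      ring
    have hr2 : (oddCount (2*k+3) : ℚ)
        = oddCount (2*k+2) + ((2*k+2 : ℕ) : ℚ) * (((2*k+1 : ℕ) : ℚ) * oddCount (2*k+1)) := by
      have h := oddCount_rec (2*k+1)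
      have h' : 2*k+1+2 = 2*k+3 := by omega
      rw [h'] at h
      push_cast [h]
      ring
    have hf1 : ((2*k+1)! : ℚ) = (2*(k:ℚ)+1) * ((2*k)! : ℚ) := by
      rw [show 2*k+1 = (2*k)+1 from rfl, Nat.factorial_succ]
      push_cast; ring
    have hf2 : ((2*k+2)! : ℚ) = (2*(k:ℚ)+2) * (2*(k:ℚ)+1) * ((2*k)! : ℚ) := by
      rw [show 2*k+2 = (2*k+1)+1 from rfl, Nat.factorial_succ]
      push_cast [hf1]; ring
    have hf3 : ((2*k+3)! : ℚ) = (2*(k:ℚ)+3) * ((2*k+2)! : ℚ) := by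
      rw [show 2*k+3 = (2*k+2)+1 from rfl, Nat.factorial_succ]
      push_cast; ring
    have h4 : ((4:ℚ)^(k+1)) = 4 * 4^k := by ring
    have h4ne : ((4:ℚ)^k) ≠ 0 := by positivity
    have hkey := choose_key k
    have hidx1 : 2*(k+1) = 2*k+2 := by ring
    have hidx2 : 2*(k+1)+1 = 2*k+3 := by ring
    have g1 : (oddCount (2*k+2) : ℚ)
        = ((2*k+2)! : ℚ) * ((4:ℚ)^(k+1))⁻¹ * ((2*k+2).choose (k+1)) := by
      rw [hr1, h0, h1, hf1, hf2, h4]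
      push_cast at hkey ⊢
      linear_combination (-(((2*k)! : ℚ) * ((4:ℚ)^k)⁻¹ * (2*(k:ℚ)+1) / 4)) * hkey
    constructor
    · rw [hidx1]; exact g1
    · rw [hidx2, hidx1, hr2, g1, h1, hf3, hf2, hf1, h4]
      push_cast at hkey ⊢
      linear_combination (-((2*(k:ℚ)+2)*(2*(k:ℚ)+1)*((2*k)! : ℚ)*((4:ℚ)^k)⁻¹/4)) * hkey


end OddPerms

/-- For odd `N`, the number of permutations of `[N]` all of whose cycle lengths
are odd equals `N! · 2^{-N+1} · C(N-1, (N-1)/2)`. -/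
theorem numOddCyclePermsOdd (N : ℕ) (hN : 0 < N) (hNo : Odd N) :
    (Nat.card {σ : Equiv.Perm (Fin N) //
        ∀ x : Fin N, Odd (Function.minimalPeriod σ x)} : ℚ)
      = (N ! : ℚ) * ((2 : ℚ) ^ (N - 1))⁻¹ * ((N - 1).choose ((N - 1) / 2)) := by
  obtain ⟨k, hk⟩ := hNo
  subst hk
  have h1 : Nat.card {σ : Equiv.Perm (Fin (2*k+1)) //
      ∀ x : Fin (2*k+1), Odd (Function.minimalPeriod σ x)} = oddCount (2*k+1) := rfl
  rw [h1, (oddCount_closed k).2]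
  have h2 : 2*k+1-1 = 2*k := by omega
  rw [h2]
  have h3 : (2*k)/2 = k := by omega
  rw [h3]
  have h4 : ((2:ℚ)^(2*k)) = 4^k := by rw [pow_mul]; norm_num
  rw [h4]
end

section
/- For even N, the number of permutations of [N] all of whose cycle lengths are odd equals N! · 2^{-N} · binomial(N, N/2). -/
open Nat Function Equiv Equiv.Perm

set_option linter.unusedSectionVars false

variable {α : Type*} {β : Type*}

section basics
variable [Finite α] [Finite β]

private lemma perm_periodic (σ : Perm α) (x : α) : x ∈ periodicPts ⇑σ := by
  refine ⟨orderOf σ, _root_.orderOf_pos σ, ?_⟩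
  simp [IsPeriodicPt, IsFixedPt, iterate_eq_pow, pow_orderOf_eq_one σ]

private lemma mp_pos (σ : Perm α) (x : α) : 0 < minimalPeriod ⇑σ x :=
  minimalPeriod_pos_of_mem_periodicPts (perm_periodic σ x)

private lemma mp_eq_of_iterate (σ : Perm α) (τ : Perm β) (f : α → β) (hf : Function.Injective f)
    (x : α) (h : ∀ k : ℕ, (τ ^ k) (f x) = f ((σ ^ k) x)) :
    minimalPeriod ⇑τ (f x) = minimalPeriod ⇑σ x := by
  have key : ∀ n : ℕ, IsPeriodicPt ⇑τ n (f x) ↔ IsPeriodicPt ⇑σ n x := by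
    intro n
    simp only [IsPeriodicPt, IsFixedPt, iterate_eq_pow, h n]
    exact ⟨fun hh => hf hh, fun hh => by rw [hh]⟩
  refine le_antisymm ?_ ?_
  · exact IsPeriodicPt.minimalPeriod_le (mp_pos σ x)
      ((key _).mpr (isPeriodicPt_minimalPeriod ⇑σ x))
  · exact IsPeriodicPt.minimalPeriod_le (mp_pos τ (f x))
      ((key _).mp (isPeriodicPt_minimalPeriod ⇑τ (f x)))

private lemma mp_sameCycle (σ : Perm α) {x y : α} (h : σ.SameCycle x y) :
    minimalPeriod ⇑σ x = minimalPeriod ⇑σ y := by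
  obtain ⟨i, -, rfl⟩ := h.exists_pow_eq'
  rw [show ((σ ^ i) x) = (⇑σ)^[i] x from rfl, minimalPeriod_apply_iterate (perm_periodic σ x)]

private lemma mp_fixed (σ : Perm α) {x : α} (h : σ x = x) : minimalPeriod ⇑σ x = 1 :=
  minimalPeriod_eq_one_iff_isFixedPt.mpr h

private lemma perm_isPeriodicPt_iff (σ : Perm α) (n : ℕ) (x : α) :
    IsPeriodicPt ⇑σ n x ↔ (σ ^ n) x = x := by
  simp only [IsPeriodicPt, IsFixedPt, iterate_eq_pow]

private lemma perm_pow_mp (σ : Perm α) (x : α) : (σ ^ minimalPeriod ⇑σ x) x = x := by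
  have := isPeriodicPt_minimalPeriod ⇑σ x
  rwa [perm_isPeriodicPt_iff] at this

end basics

section insertion

variable [Finite α] [DecidableEq α] (σ : Perm α) (a p : α) (ha : σ a = a) (hpa : p ≠ a)

include ha

private lemma fixed_pow (k : ℕ) : (σ ^ k) a = a := by
  induction k with
  | zero => rfl
  | succ k ih => rw [_root_.pow_succ, Perm.mul_apply, ha, ih]

include hpa

private lemma pow_ne_a (k : ℕ) : (σ ^ k) p ≠ a := fun h =>
  hpa ((σ ^ k).injective (h.trans (fixed_pow σ a ha k).symm))

private lemma fact1 : ∀ k < minimalPeriod ⇑σ p, ((swap a p * σ) ^ (k + 1)) a = (σ ^ k) p := by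
  intro k
  induction k with
  | zero =>
    intro _
    simp [Perm.mul_apply, ha]
  | succ k ih =>
    intro hk
    have hk' : k < minimalPeriod ⇑σ p := lt_trans (Nat.lt_succ_self k) hk
    rw [_root_.pow_succ', Perm.mul_apply, ih hk', Perm.mul_apply]
    have hs : σ ((σ ^ k) p) = (σ ^ (k + 1)) p := by rw [_root_.pow_succ', Perm.mul_apply]
    have h1 : (σ ^ (k + 1)) p ≠ a := pow_ne_a σ a p ha hpa (k + 1)
    have h2 : (σ ^ (k + 1)) p ≠ p := by
      intro h
      have hper : IsPeriodicPt ⇑σ (k + 1) p := by rw [perm_isPeriodicPt_iff]; exact h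
      exact absurd (hper.minimalPeriod_le (Nat.succ_pos k)) (not_le.mpr hk)
    rw [hs, swap_apply_of_ne_of_ne h1 h2, _root_.pow_succ', Perm.mul_apply]

private lemma fact2 : ((swap a p * σ) ^ (minimalPeriod ⇑σ p + 1)) a = a := by
  obtain ⟨m, hm⟩ := Nat.exists_eq_succ_of_ne_zero (mp_pos σ p).ne'
  rw [hm, _root_.pow_succ', Perm.mul_apply, fact1 σ a p ha hpa m (hm ▸ Nat.lt_succ_self m),
    Perm.mul_apply]
  have hmp : σ ((σ ^ m) p) = p := by
    have := perm_pow_mp σ p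
    rwa [hm, _root_.pow_succ', Perm.mul_apply] at this
  rw [hmp, swap_apply_right]

private lemma fact3 : minimalPeriod ⇑(swap a p * σ) a = minimalPeriod ⇑σ p + 1 := by
  refine le_antisymm ?_ ?_
  · refine IsPeriodicPt.minimalPeriod_le (Nat.succ_pos _) ?_
    rw [perm_isPeriodicPt_iff]
    exact fact2 σ a p ha hpa
  · by_contra hlt
    push_neg at hlt
    have hdpos : 0 < minimalPeriod ⇑(swap a p * σ) a := mp_pos _ _
    obtain ⟨k, hk⟩ := Nat.exists_eq_succ_of_ne_zero hdpos.ne'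
    have hkm : k < minimalPeriod ⇑σ p := by omega
    have hper := perm_pow_mp (swap a p * σ) a
    rw [hk, fact1 σ a p ha hpa k hkm] at hper
    exact pow_ne_a σ a p ha hpa k hper

private lemma fact4 {x : α} (hx : x ≠ a) (hsc : ¬ σ.SameCycle p x) :
    ∀ k : ℕ, ((swap a p * σ) ^ k) x = (σ ^ k) x := by
  intro k
  induction k with
  | zero => rfl
  | succ k ih =>
    rw [_root_.pow_succ', Perm.mul_apply, ih, Perm.mul_apply]
    have h1 : σ ((σ ^ k) x) ≠ a := by
      intro h
      have hxa : (σ ^ (k + 1)) x = a := by rw [_root_.pow_succ', Perm.mul_apply]; exact h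
      have : (σ ^ (k + 1)) x = (σ ^ (k + 1)) a := hxa.trans (fixed_pow σ a ha (k + 1)).symm
      exact hx ((σ ^ (k + 1)).injective this)
    have h2 : σ ((σ ^ k) x) ≠ p := by
      intro h
      refine hsc (Perm.SameCycle.symm ⟨((k + 1 : ℕ) : ℤ), ?_⟩)
      rw [zpow_natCast, _root_.pow_succ', Perm.mul_apply]
      exact h
    rw [swap_apply_of_ne_of_ne h1 h2, _root_.pow_succ', Perm.mul_apply]

private lemma fact5 {x : α} (hx : x ≠ a) (hsc : ¬ σ.SameCycle p x) :
    minimalPeriod ⇑(swap a p * σ) x = minimalPeriod ⇑σ x :=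
  mp_eq_of_iterate σ (swap a p * σ) id (fun _ _ h => h) x
    (fun k => fact4 σ a p ha hpa hx hsc k)

private lemma fact6 {x : α} (hsc : σ.SameCycle p x) :
    (swap a p * σ).SameCycle a x := by
  obtain ⟨i, -, hi⟩ := hsc.exists_pow_eq'
  have hmod : (⇑σ)^[i % minimalPeriod ⇑σ p] p = (⇑σ)^[i] p := iterate_mod_minimalPeriod_eq
  simp only [iterate_eq_pow] at hmod
  have hi2 : (σ ^ (i % minimalPeriod ⇑σ p)) p = x := hmod.trans hi
  refine ⟨((i % minimalPeriod ⇑σ p + 1 : ℕ) : ℤ), ?_⟩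
  rw [zpow_natCast, fact1 σ a p ha hpa _ (Nat.mod_lt _ (mp_pos σ p))]
  exact hi2

private lemma fact7 {x : α} :
    (swap a p * σ).SameCycle a x ↔ (x = a ∨ σ.SameCycle p x) := by
  constructor
  · intro h
    obtain ⟨i, -, hi⟩ := h.exists_pow_eq'
    have hmod : (⇑(swap a p * σ))^[i % minimalPeriod ⇑(swap a p * σ) a] a
        = (⇑(swap a p * σ))^[i] a := iterate_mod_minimalPeriod_eq
    rw [fact3 σ a p ha hpa] at hmod
    simp only [iterate_eq_pow] at hmod
    have hmod2 : ((swap a p * σ) ^ (i % (minimalPeriod ⇑σ p + 1))) a = x := hmod.trans hi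
    rcases Nat.eq_zero_or_pos (i % (minimalPeriod ⇑σ p + 1)) with h0 | h0
    · left; rw [h0] at hmod2; exact hmod2.symm
    · right
      obtain ⟨k, hk⟩ := Nat.exists_eq_succ_of_ne_zero h0.ne'
      have hkm : k < minimalPeriod ⇑σ p := by
        have := Nat.mod_lt i (show 0 < minimalPeriod ⇑σ p + 1 by omega)
        omega
      rw [hk, fact1 σ a p ha hpa k hkm] at hmod2
      exact ⟨(k : ℤ), by rw [zpow_natCast]; exact hmod2⟩
  · rintro (rfl | h)
    · exact Perm.SameCycle.refl _ _
    · exact fact6 σ a p ha hpa h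

private lemma fact8 {x : α} (hsc : σ.SameCycle p x) :
    minimalPeriod ⇑(swap a p * σ) x = minimalPeriod ⇑σ p + 1 := by
  rw [← mp_sameCycle (swap a p * σ) (fact6 σ a p ha hpa hsc), fact3 σ a p ha hpa]

end insertion

/-- all cycles odd -/
private def allOdd {γ : Type*} (σ : Perm γ) : Prop := ∀ x, Odd (minimalPeriod ⇑σ x)

/-- the cycle through `c` is even, all others odd -/
private def oneEven {γ : Type*} (σ : Perm γ) (c : γ) : Prop :=
  Even (minimalPeriod ⇑σ c) ∧ ∀ x, ¬ σ.SameCycle c x → Odd (minimalPeriod ⇑σ x)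

section characterization

variable [Finite α] [DecidableEq α] (σ : Perm α) (a p : α) (ha : σ a = a) (hpa : p ≠ a)

include ha hpa

private lemma allOdd_insert : allOdd (swap a p * σ) ↔ oneEven σ p := by
  constructor
  · intro h
    constructor
    · have h1 := h a
      rw [fact3 σ a p ha hpa] at h1
      rw [Nat.even_iff]; rw [Nat.odd_iff] at h1; omega
    · intro x hx
      by_cases hxa : x = a
      · subst hxa; rw [mp_fixed σ ha]; exact odd_one
      · rw [← fact5 σ a p ha hpa hxa hx]; exact h x
  · rintro ⟨h1, h2⟩ x
    by_cases hx : x = a ∨ σ.SameCycle p x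
    · have hmp : minimalPeriod ⇑(swap a p * σ) x = minimalPeriod ⇑σ p + 1 := by
        rcases hx with hxa | hx
        · subst hxa; exact fact3 _ _ _ ha hpa
        · exact fact8 σ a p ha hpa hx
      rw [hmp, Nat.odd_iff]; rw [Nat.even_iff] at h1; omega
    · push_neg at hx
      rw [fact5 σ a p ha hpa hx.1 hx.2]
      exact h2 x hx.2

private lemma oneEven_insert : oneEven (swap a p * σ) a ↔ allOdd σ := by
  constructor
  · rintro ⟨h1, h2⟩ x
    rw [fact3 σ a p ha hpa] at h1
    by_cases hsc : σ.SameCycle p x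
    · rw [← mp_sameCycle σ hsc, Nat.odd_iff]; rw [Nat.even_iff] at h1; omega
    · by_cases hxa : x = a
      · subst hxa; rw [mp_fixed σ ha]; exact odd_one
      · have hnsc : ¬ (swap a p * σ).SameCycle a x := by
          rw [fact7 σ a p ha hpa]; push_neg; exact ⟨hxa, hsc⟩
        rw [← fact5 σ a p ha hpa hxa hsc]
        exact h2 x hnsc
  · intro h
    constructor
    · rw [fact3 σ a p ha hpa]
      have h1 := h p
      rw [Nat.even_iff]; rw [Nat.odd_iff] at h1; omega
    · intro x hnsc
      rw [fact7 σ a p ha hpa] at hnsc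
      push_neg at hnsc
      rw [fact5 σ a p ha hpa hnsc.1 hnsc.2]
      exact h x

end characterization

section hat

variable {n : ℕ} (e : Perm (Fin n))

private lemma hat_zero : (decomposeFin.symm ((0 : Fin (n + 1)), e)) 0 = 0 :=
  decomposeFin_symm_apply_zero 0 e

private lemma hat_succ (x : Fin n) :
    (decomposeFin.symm ((0 : Fin (n + 1)), e)) x.succ = (e x).succ := by
  rw [decomposeFin_symm_apply_succ, Equiv.swap_self, Equiv.refl_apply]

private lemma hat_pow_succ (k : ℕ) (x : Fin n) :
    ((decomposeFin.symm ((0 : Fin (n + 1)), e)) ^ k) x.succ = ((e ^ k) x).succ := by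
  induction k with
  | zero => rfl
  | succ k ih => rw [_root_.pow_succ', Perm.mul_apply, ih, hat_succ, _root_.pow_succ',
      Perm.mul_apply]

private lemma mp_hat_zero :
    minimalPeriod ⇑(decomposeFin.symm ((0 : Fin (n + 1)), e)) 0 = 1 :=
  mp_fixed _ (hat_zero e)

private lemma mp_hat_succ (x : Fin n) :
    minimalPeriod ⇑(decomposeFin.symm ((0 : Fin (n + 1)), e)) x.succ
      = minimalPeriod ⇑e x :=
  mp_eq_of_iterate e _ Fin.succ (Fin.succ_injective n) x (fun k => hat_pow_succ e k x)

private lemma sc_hat_succ (x y : Fin n) :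
    (decomposeFin.symm ((0 : Fin (n + 1)), e)).SameCycle x.succ y.succ ↔ e.SameCycle x y := by
  constructor
  · intro h
    obtain ⟨i, -, hi⟩ := h.exists_pow_eq'
    rw [hat_pow_succ] at hi
    exact ⟨(i : ℤ), by rw [zpow_natCast]; exact Fin.succ_injective n hi⟩
  · intro h
    obtain ⟨i, -, hi⟩ := h.exists_pow_eq'
    exact ⟨(i : ℤ), by rw [zpow_natCast, hat_pow_succ, hi]⟩

private lemma not_sc_hat_zero (x : Fin n) :
    ¬ (decomposeFin.symm ((0 : Fin (n + 1)), e)).SameCycle x.succ 0 := by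
  intro h
  obtain ⟨i, -, hi⟩ := h.exists_pow_eq'
  rw [hat_pow_succ] at hi
  exact Fin.succ_ne_zero _ hi

private lemma decomp_eq (p : Fin (n + 1)) :
    decomposeFin.symm (p, e) = swap 0 p * decomposeFin.symm ((0 : Fin (n + 1)), e) := by
  ext z
  refine Fin.cases ?_ ?_ z
  · rw [Perm.mul_apply, hat_zero, decomposeFin_symm_apply_zero, swap_apply_left]
  · intro x
    rw [Perm.mul_apply, hat_succ, decomposeFin_symm_apply_succ]

private lemma T1 : allOdd (decomposeFin.symm ((0 : Fin (n + 1)), e)) ↔ allOdd e := by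
  constructor
  · intro h x
    have := h x.succ
    rwa [mp_hat_succ] at this
  · intro h x
    refine Fin.cases ?_ ?_ x
    · rw [mp_hat_zero]; exact odd_one
    · intro y; rw [mp_hat_succ]; exact h y

private lemma T2 (q : Fin n) :
    allOdd (decomposeFin.symm (q.succ, e)) ↔ oneEven e q := by
  rw [decomp_eq, allOdd_insert _ _ _ (hat_zero e) (Fin.succ_ne_zero q)]
  constructor
  · rintro ⟨h1, h2⟩
    rw [mp_hat_succ] at h1
    refine ⟨h1, fun y hy => ?_⟩
    have := h2 y.succ (fun hc => hy ((sc_hat_succ e q y).mp hc))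
    rwa [mp_hat_succ] at this
  · rintro ⟨h1, h2⟩
    refine ⟨by rwa [mp_hat_succ], fun x => ?_⟩
    refine Fin.cases ?_ ?_ x
    · intro _; rw [mp_hat_zero]; exact odd_one
    · intro y hy
      rw [mp_hat_succ]
      exact h2 y (fun hc => hy ((sc_hat_succ e q y).mpr hc))

private lemma T3 : ¬ oneEven (decomposeFin.symm ((0 : Fin (n + 1)), e)) 0 := by
  rintro ⟨h1, -⟩
  rw [mp_hat_zero, Nat.even_iff] at h1
  omega

private lemma T4 (q : Fin n) :
    oneEven (decomposeFin.symm (q.succ, e)) 0 ↔ allOdd e := by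
  rw [decomp_eq, oneEven_insert _ _ _ (hat_zero e) (Fin.succ_ne_zero q), T1]

end hat

section conj

variable [Finite α] [DecidableEq α]

private lemma conj_pow_perm (g σ : Perm α) (k : ℕ) : (g * σ * g⁻¹) ^ k = g * σ ^ k * g⁻¹ := by
  induction k with
  | zero => simp
  | succ k ih => rw [_root_.pow_succ, ih, _root_.pow_succ]; group

private lemma mp_conj (g σ : Perm α) (x : α) :
    minimalPeriod ⇑(g * σ * g⁻¹) (g x) = minimalPeriod ⇑σ x :=
  mp_eq_of_iterate σ _ ⇑g g.injective x (fun k => by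
    rw [conj_pow_perm]; simp [Perm.mul_apply])

private lemma oneEven_conj (g σ : Perm α) (c : α) :
    oneEven (g * σ * g⁻¹) (g c) ↔ oneEven σ c := by
  constructor
  · rintro ⟨h1, h2⟩
    rw [mp_conj] at h1
    refine ⟨h1, fun y hy => ?_⟩
    have hns : ¬ (g * σ * g⁻¹).SameCycle (g c) (g y) := by
      rw [sameCycle_conj]; simpa using hy
    have := h2 (g y) hns
    rwa [mp_conj] at this
  · rintro ⟨h1, h2⟩
    refine ⟨by rwa [mp_conj], fun x hx => ?_⟩
    have hx' : ¬ σ.SameCycle c (g⁻¹ x) := by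
      rw [sameCycle_conj] at hx; simpa using hx
    have := h2 (g⁻¹ x) hx'
    rw [← mp_conj g σ (g⁻¹ x)] at this
    simpa using this

end conj

section counting

private noncomputable def cntA (n : ℕ) : ℕ := Nat.card {σ : Perm (Fin n) // allOdd σ}

private noncomputable def cntC (n : ℕ) (c : Fin n) : ℕ :=
  Nat.card {σ : Perm (Fin n) // oneEven σ c}

private lemma ncard_sigma {ι : Type*} [Fintype ι] (f : ι → Type*) [∀ i, Finite (f i)] :
    Nat.card (Sigma f) = ∑ i, Nat.card (f i) := by
  letI : ∀ i, Fintype (f i) := fun i => Fintype.ofFinite (f i)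
  simp [Nat.card_eq_fintype_card, Fintype.card_sigma]

private lemma cntA_succ (n : ℕ) :
    cntA (n + 1) = cntA n + ∑ q : Fin n, cntC n q := by
  calc cntA (n + 1)
      = Nat.card {x : Fin (n + 1) × Perm (Fin n) // allOdd (decomposeFin.symm x)} :=
        Nat.card_congr (Equiv.subtypeEquiv decomposeFin (fun σ => by
          rw [Equiv.symm_apply_apply]))
    _ = Nat.card (Σ p : Fin (n + 1), {e : Perm (Fin n) // allOdd (decomposeFin.symm (p, e))}) :=
        Nat.card_congr (Equiv.subtypeProdEquivSigmaSubtype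
          (fun (a : Fin (n + 1)) (b : Perm (Fin n)) => allOdd (decomposeFin.symm (a, b))))
    _ = ∑ p : Fin (n + 1), Nat.card {e : Perm (Fin n) // allOdd (decomposeFin.symm (p, e))} :=
        ncard_sigma _
    _ = Nat.card {e : Perm (Fin n) // allOdd (decomposeFin.symm ((0 : Fin (n + 1)), e))}
        + ∑ q : Fin n,
            Nat.card {e : Perm (Fin n) // allOdd (decomposeFin.symm (Fin.succ q, e))} :=
        Fin.sum_univ_succ _
    _ = cntA n + ∑ q : Fin n, cntC n q := by
        congr 1
        · exact Nat.card_congr (Equiv.subtypeEquivRight (fun e => T1 e))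
        · exact Finset.sum_congr rfl
            (fun q _ => Nat.card_congr (Equiv.subtypeEquivRight (fun e => T2 e q)))

private lemma cntC_eq (n : ℕ) (q : Fin (n + 1)) : cntC (n + 1) q = cntC (n + 1) 0 := by
  have hg : (swap (0 : Fin (n + 1)) q) q = 0 := swap_apply_right _ _
  refine Nat.card_congr
    (Equiv.subtypeEquiv (MulAut.conj (swap (0 : Fin (n + 1)) q)).toEquiv (fun σ => ?_))
  have he : (MulAut.conj (swap (0 : Fin (n + 1)) q)).toEquiv σ
      = swap (0 : Fin (n + 1)) q * σ * (swap (0 : Fin (n + 1)) q)⁻¹ := rfl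
  rw [he]
  have h2 := oneEven_conj (swap (0 : Fin (n + 1)) q) σ q
  rw [hg] at h2
  exact h2.symm

private lemma cntC_succ (n : ℕ) : cntC (n + 1) 0 = n * cntA n := by
  calc cntC (n + 1) 0
      = Nat.card {x : Fin (n + 1) × Perm (Fin n) // oneEven (decomposeFin.symm x) 0} :=
        Nat.card_congr (Equiv.subtypeEquiv decomposeFin (fun σ => by
          rw [Equiv.symm_apply_apply]))
    _ = Nat.card (Σ p : Fin (n + 1),
          {e : Perm (Fin n) // oneEven (decomposeFin.symm (p, e)) 0}) :=
        Nat.card_congr (Equiv.subtypeProdEquivSigmaSubtype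
          (fun (a : Fin (n + 1)) (b : Perm (Fin n)) => oneEven (decomposeFin.symm (a, b)) 0))
    _ = ∑ p : Fin (n + 1),
          Nat.card {e : Perm (Fin n) // oneEven (decomposeFin.symm (p, e)) 0} :=
        ncard_sigma _
    _ = Nat.card {e : Perm (Fin n) // oneEven (decomposeFin.symm ((0 : Fin (n + 1)), e)) 0}
        + ∑ q : Fin n,
            Nat.card {e : Perm (Fin n) // oneEven (decomposeFin.symm (Fin.succ q, e)) 0} :=
        Fin.sum_univ_succ _
    _ = 0 + ∑ q : Fin n, cntA n := by
        congr 1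
        · haveI : IsEmpty {e : Perm (Fin n) //
              oneEven (decomposeFin.symm ((0 : Fin (n + 1)), e)) 0} :=
            ⟨fun ⟨e, he⟩ => T3 e he⟩
          exact Nat.card_of_isEmpty
        · exact Finset.sum_congr rfl
            (fun q _ => Nat.card_congr (Equiv.subtypeEquivRight (fun e => T4 e q)))
    _ = n * cntA n := by simp [Finset.sum_const, mul_comm]

private lemma cntA_rec (n : ℕ) : cntA (n + 2) = cntA (n + 1) + (n + 1) * (n * cntA n) := by
  rw [cntA_succ (n + 1)]
  congr 1
  calc ∑ q : Fin (n + 1), cntC (n + 1) q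
      = ∑ _q : Fin (n + 1), cntC (n + 1) 0 :=
        Finset.sum_congr rfl fun q _ => cntC_eq n q
    _ = (n + 1) * cntC (n + 1) 0 := by simp [Finset.sum_const, mul_comm]
    _ = (n + 1) * (n * cntA n) := by rw [cntC_succ]

private lemma cntA_zero : cntA 0 = 1 := by
  have h : ∀ σ : Perm (Fin 0), allOdd σ := fun σ x => x.elim0
  calc cntA 0 = Nat.card (Perm (Fin 0)) := Nat.card_congr (Equiv.subtypeUnivEquiv h)
    _ = 1 := by simp [Nat.card_eq_fintype_card]

private lemma cntA_one : cntA 1 = 1 := by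
  have h : ∀ σ : Perm (Fin 1), allOdd σ := fun σ x => by
    rw [mp_fixed σ (Subsingleton.elim _ _)]; exact odd_one
  calc cntA 1 = Nat.card (Perm (Fin 1)) := Nat.card_congr (Equiv.subtypeUnivEquiv h)
    _ = 1 := by simp [Nat.card_eq_fintype_card]

end counting

private lemma cntA_closed : ∀ m : ℕ, cntA (2 * m) = ((2 * m - 1)‼) ^ 2 ∧
    cntA (2 * m + 1) = ((2 * m + 1)‼) * ((2 * m - 1)‼) := by
  intro m
  induction m with
  | zero =>
    constructor
    · simpa using cntA_zero
    · simpa using cntA_one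
  | succ m ih =>
    obtain ⟨h0, h1⟩ := ih
    have hA2 : cntA (2 * m + 2) = ((2 * m + 1)‼) ^ 2 := by
      rw [cntA_rec, h0, h1, Nat.doubleFactorial_add_one (2 * m)]
      ring
    have hA3 : cntA (2 * m + 3) = ((2 * m + 3)‼) * ((2 * m + 1)‼) := by
      rw [show 2 * m + 3 = (2 * m + 1) + 2 by ring, cntA_rec,
        show 2 * m + 1 + 1 = 2 * m + 2 by ring, hA2, h1,
        show (2 * m + 1 + 2)‼ = (2 * m + 1 + 2) * (2 * m + 1)‼ from
          Nat.doubleFactorial_add_two _,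
        Nat.doubleFactorial_add_one (2 * m)]
      ring
    refine ⟨?_, ?_⟩
    · rw [show 2 * (m + 1) = 2 * m + 2 by ring, show 2 * m + 2 - 1 = 2 * m + 1 by omega]
      exact hA2
    · rw [show 2 * (m + 1) + 1 = 2 * m + 3 by ring, show 2 * (m + 1) - 1 = 2 * m + 1 by omega]
      exact hA3

private lemma key_nat (m : ℕ) (hm : 0 < m) :
    ((2 * m - 1)‼) ^ 2 * 2 ^ (2 * m) = (2 * m)! * (2 * m).choose m := by
  obtain ⟨k, rfl⟩ := Nat.exists_eq_succ_of_ne_zero hm.ne'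
  have h1 : (2 * (k + 1))! = (2 * (k + 1))‼ * (2 * (k + 1) - 1)‼ := by
    rw [show 2 * (k + 1) = (2 * k + 1) + 1 by ring,
      Nat.factorial_eq_mul_doubleFactorial, show 2 * k + 1 + 1 - 1 = 2 * k + 1 by omega]
  have h2 : (2 * (k + 1))‼ = 2 ^ (k + 1) * (k + 1)! := Nat.doubleFactorial_two_mul (k + 1)
  have h3 : (2 * (k + 1)).choose (k + 1) * (k + 1)! * (k + 1)! = (2 * (k + 1))! := by
    have := Nat.choose_mul_factorial_mul_factorial
      (show k + 1 ≤ 2 * (k + 1) by omega)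
    rwa [show 2 * (k + 1) - (k + 1) = k + 1 by omega] at this
  set m := k + 1
  have expand : ((2 * m - 1)‼) ^ 2 * 2 ^ (2 * m) * ((m)! * (m)!)
      = ((2 * m)!) ^ 2 := by
    calc ((2 * m - 1)‼) ^ 2 * 2 ^ (2 * m) * ((m)! * (m)!)
        = ((2 * m - 1)‼ * (2 ^ m * (m)!)) ^ 2 := by
          rw [show 2 * m = m + m by ring, pow_add]; ring
      _ = ((2 * m - 1)‼ * (2 * m)‼) ^ 2 := by rw [← h2]
      _ = ((2 * m)!) ^ 2 := by rw [h1]; ring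
  have expand2 : ((2 * m)! * (2 * m).choose m) * ((m)! * (m)!) = ((2 * m)!) ^ 2 := by
    calc ((2 * m)! * (2 * m).choose m) * ((m)! * (m)!)
        = (2 * m)! * ((2 * m).choose m * (m)! * (m)!) := by ring
      _ = (2 * m)! * (2 * m)! := by rw [h3]
      _ = ((2 * m)!) ^ 2 := by ring
  exact Nat.eq_of_mul_eq_mul_right (by positivity) (expand.trans expand2.symm)

/-- For even `N`, the number of permutations of `[N]` all of whose cycle lengths
are odd equals `N! · 2^{-N} · C(N, N/2)`. -/
theorem numOddCyclePermsEven (N : ℕ) (hN : 0 < N) (hNe : Even N) :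
    (Nat.card {σ : Equiv.Perm (Fin N) //
        ∀ x : Fin N, Odd (Function.minimalPeriod σ x)} : ℚ)
      = (N ! : ℚ) * ((2 : ℚ) ^ N)⁻¹ * (N.choose (N / 2)) := by
  obtain ⟨m, rfl⟩ := hNe
  rw [show m + m = 2 * m by ring]
  have hm : 0 < m := by omega
  have hdiv : 2 * m / 2 = m := by omega
  rw [hdiv]
  have hcard : Nat.card {σ : Equiv.Perm (Fin (2 * m)) //
      ∀ x : Fin (2 * m), Odd (Function.minimalPeriod σ x)} = ((2 * m - 1)‼) ^ 2 :=
    (cntA_closed m).1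
  rw [hcard]
  have key := key_nat m hm
  have keyQ : (((2 * m - 1)‼ : ℚ)) ^ 2 * 2 ^ (2 * m)
      = ((2 * m)! : ℚ) * ((2 * m).choose m : ℚ) := by
    exact_mod_cast congrArg (Nat.cast : ℕ → ℚ) key
  have h2 : ((2 : ℚ) ^ (2 * m)) ≠ 0 := by positivity
  field_simp
  push_cast
  linear_combination keyQ
end

section
/- For every positive integer N, (-1)^{N-1} · ∑_{j=0}^{N-2} ((-1)^j / j!) · ∑_{k=j}^{N-1} (-1)^k · k! equals N! · ∑_{μ=0}^{N-1} (-1)^μ / ((N-μ) · μ!) + (-1)^N. -/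
open Nat Finset



lemma L1 (m : ℕ) :
    ∑ k ∈ range (m+1), (-1:ℚ)^k * ((m+1).choose k) * (k ! : ℚ)
      = (-1:ℚ)^(m+1) * ((m+1)! : ℚ) * (∑ j ∈ range (m+2), (-1:ℚ)^j / (j ! : ℚ))
        - (-1:ℚ)^(m+1) * ((m+1)! : ℚ) := by
  rw [← Finset.sum_range_reflect]
  simp only [Nat.add_sub_cancel]
  have h1 : ∀ k ∈ range (m+1), (-1:ℚ)^(m-k) * ((m+1).choose (m-k) : ℚ) * ((m-k)! : ℚ)
      = (-1:ℚ)^m * ((m+1)! : ℚ) * ((-1:ℚ)^k / ((k+1)! : ℚ)) := by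
    intro k hk
    have hkm : k ≤ m := Nat.lt_succ_iff.mp (Finset.mem_range.mp hk)
    have hs : (-1:ℚ)^(m-k) * (-1:ℚ)^k = (-1:ℚ)^m := by
      rw [← pow_add, Nat.sub_add_cancel hkm]
    have hf : ((m+1).choose (m-k) * (m-k)! * (k+1)! : ℕ) = (m+1)! := by
      have h := Nat.choose_mul_factorial_mul_factorial (Nat.le_succ_of_le (Nat.sub_le m k))
      have : m + 1 - (m - k) = k + 1 := by omega
      rwa [this] at h
    have hfQ : ((m+1).choose (m-k) : ℚ) * ((m-k)! : ℚ) * ((k+1)! : ℚ) = ((m+1)! : ℚ) := by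
      exact_mod_cast congrArg (Nat.cast : ℕ → ℚ) hf
    have hkk : (-1:ℚ)^(k*2) = 1 := by
      rw [mul_comm, pow_mul, neg_one_sq, one_pow]
    have h1ne : ((k+1)! : ℚ) ≠ 0 := Nat.cast_ne_zero.mpr (Nat.factorial_ne_zero _)
    rw [← hfQ, ← hs]
    field_simp
    linear_combination (-1 * ((m+1).choose (m-k) : ℚ)) * hkk
  rw [Finset.sum_congr rfl h1, ← Finset.mul_sum]
  have h2 : ∑ j ∈ range (m+2), (-1:ℚ)^j / (j ! : ℚ)
      = 1 - ∑ k ∈ range (m+1), (-1:ℚ)^k / ((k+1)! : ℚ) := by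
    rw [Finset.sum_range_succ']
    have h3 : ∀ k ∈ range (m+1), (-1:ℚ)^(k+1) / ((k+1)! : ℚ)
        = -((-1:ℚ)^k / ((k+1)! : ℚ)) := by
      intro k _; rw [pow_succ]; ring
    rw [Finset.sum_congr rfl h3, Finset.sum_neg_distrib]
    simp [Nat.factorial_zero]
    ring
  rw [h2, pow_succ]
  ring

lemma key (n : ℕ) :
    ∑ j ∈ range n, ((-1:ℚ)^j / (j ! : ℚ)) * ∑ k ∈ Icc j n, (-1:ℚ)^k * (k ! : ℚ)
      = ∑ k ∈ range (n+1), (-1:ℚ)^k * ((n+1).choose (k+1)) * (k ! : ℚ) - 1 := by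
  induction n with
  | zero => simp
  | succ n ih =>
    rw [Finset.sum_range_succ]
    have hsplit : ∀ j ∈ range n,
        ((-1:ℚ)^j / (j ! : ℚ)) * ∑ k ∈ Icc j (n+1), (-1:ℚ)^k * (k ! : ℚ)
        = ((-1:ℚ)^j / (j ! : ℚ)) * ∑ k ∈ Icc j n, (-1:ℚ)^k * (k ! : ℚ)
          + (-1:ℚ)^(n+1) * (((n+1))! : ℚ) * ((-1:ℚ)^j / (j ! : ℚ)) := by
      intro j hj
      have hj' : j ≤ n + 1 := by have := Finset.mem_range.mp hj; omega
      rw [Finset.sum_Icc_succ_top hj']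
      ring
    rw [Finset.sum_congr rfl hsplit, Finset.sum_add_distrib, ih, ← Finset.mul_sum]
    have hIcc : ∑ k ∈ Icc n (n+1), (-1:ℚ)^k * (k ! : ℚ)
        = (-1:ℚ)^n * (n ! : ℚ) + (-1:ℚ)^(n+1) * (((n+1))! : ℚ) := by
      rw [Finset.sum_Icc_succ_top (Nat.le_succ n), Finset.Icc_self, Finset.sum_singleton]
    rw [hIcc]
    have hR : ∑ k ∈ range (n+2), (-1:ℚ)^k * (((n+2).choose (k+1) : ℕ) : ℚ) * (k ! : ℚ)
        = ∑ k ∈ range (n+1), (-1:ℚ)^k * (((n+1).choose k : ℕ) : ℚ) * (k ! : ℚ)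
          + (-1:ℚ)^(n+1) * (((n+1))! : ℚ)
          + ∑ k ∈ range (n+1), (-1:ℚ)^k * (((n+1).choose (k+1) : ℕ) : ℚ) * (k ! : ℚ) := by
      have hp : ∀ k ∈ range (n+2), (-1:ℚ)^k * (((n+2).choose (k+1) : ℕ) : ℚ) * (k ! : ℚ)
          = (-1:ℚ)^k * (((n+1).choose k : ℕ) : ℚ) * (k ! : ℚ)
            + (-1:ℚ)^k * (((n+1).choose (k+1) : ℕ) : ℚ) * (k ! : ℚ) := by
        intro k _
        rw [Nat.choose_succ_succ (n+1) k]
        push_cast; ring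
      rw [Finset.sum_congr rfl hp, Finset.sum_add_distrib,
        Finset.sum_range_succ, Finset.sum_range_succ
          (fun k => (-1:ℚ)^k * (((n+1).choose (k+1) : ℕ) : ℚ) * (k ! : ℚ))]
      have hz : (n+1).choose (n+2) = 0 := Nat.choose_eq_zero_of_lt (by omega)
      simp only [hz, Nat.choose_self, Nat.cast_zero, Nat.cast_one]
      ring
    rw [hR, L1 n]
    have hP : ∑ j ∈ range (n+2), (-1:ℚ)^j / (j ! : ℚ)
        = ∑ j ∈ range n, (-1:ℚ)^j / (j ! : ℚ)
          + (-1:ℚ)^n / (n ! : ℚ) + (-1:ℚ)^(n+1) / (((n+1))! : ℚ) := by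
      rw [Finset.sum_range_succ, Finset.sum_range_succ]
    rw [hP]
    have h0 : (n ! : ℚ) ≠ 0 := Nat.cast_ne_zero.mpr n.factorial_ne_zero
    have h1 : (((n+1))! : ℚ) ≠ 0 := Nat.cast_ne_zero.mpr (n+1).factorial_ne_zero
    push_cast [Nat.factorial_succ]
    simp only [pow_succ]
    rcases Nat.even_or_odd n with h | h
    · simp only [h.neg_one_pow]
      field_simp
      ring
    · simp only [h.neg_one_pow]
      field_simp
      ring

lemma L2 (n : ℕ) :
    ((((n+1))! : ℕ) : ℚ) * ∑ μ ∈ range (n+1), (-1:ℚ)^μ / ((((n+1 : ℕ)) : ℚ) - (μ : ℚ)) / (μ ! : ℚ)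
      = (-1:ℚ)^n * ∑ k ∈ range (n+1), (-1:ℚ)^k * (((n+1).choose (k+1) : ℕ) : ℚ) * (k ! : ℚ) := by
  rw [Finset.mul_sum]
  have hL : ∀ μ ∈ range (n+1),
      ((((n+1))! : ℕ) : ℚ) * ((-1:ℚ)^μ / ((((n+1 : ℕ)) : ℚ) - (μ : ℚ)) / (μ ! : ℚ))
      = (-1:ℚ)^μ * (((n+1).choose μ : ℕ) : ℚ) * (((n-μ)! : ℕ) : ℚ) := by
    intro μ hμ
    have hμn : μ ≤ n := Nat.lt_succ_iff.mp (Finset.mem_range.mp hμ)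
    have hc : ((((n+1 : ℕ)) : ℚ) - (μ : ℚ)) = (((n+1-μ : ℕ)) : ℚ) := by
      push_cast [Nat.cast_sub (by omega : μ ≤ n+1)]; ring
    have hf : ((n+1).choose μ * μ ! * (n+1-μ)! : ℕ) = (n+1)! :=
      Nat.choose_mul_factorial_mul_factorial (by omega)
    have hf2 : (n+1-μ)! = (n+1-μ) * (n-μ)! := by
      have : n+1-μ = (n-μ)+1 := by omega
      rw [this, Nat.factorial_succ]
    rw [hf2] at hf
    have hfQ : (((n+1).choose μ : ℕ) : ℚ) * (μ ! : ℚ) * ((((n+1-μ : ℕ)) : ℚ) * (((n-μ)! : ℕ) : ℚ))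
        = ((((n+1))! : ℕ) : ℚ) := by exact_mod_cast congrArg (Nat.cast : ℕ → ℚ) hf
    have hne1 : ((((n+1-μ : ℕ)) : ℚ)) ≠ 0 :=
      Nat.cast_ne_zero.mpr (by omega)
    have hne2 : (μ ! : ℚ) ≠ 0 := Nat.cast_ne_zero.mpr μ.factorial_ne_zero
    rw [hc, ← hfQ]
    field_simp
  rw [Finset.sum_congr rfl hL, ← Finset.sum_range_reflect]
  rw [Finset.mul_sum]
  apply Finset.sum_congr rfl
  intro k hk
  have hkn : k ≤ n := Nat.lt_succ_iff.mp (Finset.mem_range.mp hk)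
  have e1 : n + 1 - 1 - k = n - k := by omega
  have e2 : n - (n - k) = k := by omega
  have e3 : (n+1).choose (n-k) = (n+1).choose (k+1) := by
    have : n - k = (n+1) - (k+1) := by omega
    rw [this, Nat.choose_symm (by omega)]
  rw [e1, e2, e3]
  have hs : (-1:ℚ)^(n-k) * (-1:ℚ)^k = (-1:ℚ)^n := by
    rw [← pow_add, Nat.sub_add_cancel hkn]
  have hkk : (-1:ℚ)^(k*2) = 1 := by
    rw [mul_comm, pow_mul, neg_one_sq, one_pow]
  linear_combination ((((n+1).choose (k+1) : ℕ) : ℚ) * ((k)! : ℚ) * (-1:ℚ)^k) * hs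
    - ((((n+1).choose (k+1) : ℕ) : ℚ) * ((k)! : ℚ) * (-1:ℚ)^(n-k)) * hkk

/-- `(-1)^{N-1}·∑_{j=0}^{N-2} ((-1)^j/j!)·∑_{k=j}^{N-1} (-1)^k k!
    = N!·∑_{μ=0}^{N-1} (-1)^μ/((N-μ)·μ!) + (-1)^N`. -/
theorem alternating_sum_identity (N : ℕ) (hN : 0 < N) :
    (-1 : ℚ) ^ (N - 1) *
        ∑ j ∈ Finset.range (N - 1),
          ((-1 : ℚ) ^ j / (j ! : ℚ)) * ∑ k ∈ Finset.Icc j (N - 1), (-1 : ℚ) ^ k * (k ! : ℚ)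
      = (N ! : ℚ) * (∑ μ ∈ Finset.range N, (-1 : ℚ) ^ μ / (((N : ℚ) - μ) * (μ ! : ℚ)))
          + (-1 : ℚ) ^ N := by

  obtain ⟨n, rfl⟩ := Nat.exists_eq_succ_of_ne_zero hN.ne'
  simp only [Nat.succ_sub_one]
  rw [key n]
  have hdiv : ∀ μ ∈ range (n+1), (-1 : ℚ) ^ μ / ((((n+1:ℕ) : ℚ)) - (μ:ℚ)) / (μ ! : ℚ)
      = (-1 : ℚ) ^ μ / (((((n+1:ℕ)) : ℚ) - μ) * (μ ! : ℚ)) := by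
    intro μ _; rw [div_div]
  rw [← Finset.sum_congr rfl hdiv, L2 n, pow_succ]
  ring
end

section
/- The number of N-cycles p on [N] such that no i ∈ [N] satisfies p(i) ≡ i - 1 (mod N) equals N! · ∑_{μ=0}^{N-1} (-1)^μ / ((N-μ) · μ!) + (-1)^N. -/
open Nat Equiv Finset

namespace CycShift

variable {α β : Type*}

/-- A permutation is a "full cycle" if every two points are on the same cycle. -/
def Full (p : Equiv.Perm α) : Prop := ∀ x y : α, p.SameCycle x y

lemma sameCycle_of_pow {p : Perm α} {x y : α} (n : ℕ) (h : (p ^ n) x = y) :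
    p.SameCycle x y := ⟨(n : ℤ), by rwa [zpow_natCast]⟩

lemma full_fix {p : Perm α} {a : α} (hp : Full p) (h : p a = a) (x : α) : x = a := by
  obtain ⟨k, hk⟩ := hp a x
  rw [Equiv.Perm.zpow_apply_eq_self_of_apply_eq_self h] at hk
  exact hk.symm

lemma full_apply_ne {p : Perm α} (hp : Full p) {a b : α} (hab : a ≠ b) : p a ≠ a :=
  fun h => hab ((full_fix hp h a).symm ▸ (full_fix hp h b) ▸ rfl)

lemma full_conj {p : Perm α} (σ : Perm α) (hp : Full p) : Full (σ * p * σ⁻¹) := by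
  intro x y
  obtain ⟨k, hk⟩ := hp (σ⁻¹ x) (σ⁻¹ y)
  refine ⟨k, ?_⟩
  rw [conj_zpow, Equiv.Perm.mul_apply, Equiv.Perm.mul_apply, hk, ← Equiv.Perm.mul_apply, mul_inv_cancel, Equiv.Perm.one_apply]

lemma permCongr_pow_apply (e : β ≃ α) (p : Perm β) (n : ℕ) (x : α) :
    ((e.permCongr p) ^ n) x = e ((p ^ n) (e.symm x)) := by
  induction n generalizing x with
  | zero => simp
  | succ n ih =>
      rw [pow_succ, Equiv.Perm.mul_apply, Equiv.permCongr_apply, ih, pow_succ,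
        Equiv.Perm.mul_apply, Equiv.symm_apply_apply]

lemma full_permCongr [Finite β] (e : β ≃ α) {p : Perm β} (hp : Full p) :
    Full (e.permCongr p) := by
  intro x y
  obtain ⟨n, -, hn⟩ := (hp (e.symm x) (e.symm y)).exists_pow_eq'
  exact sameCycle_of_pow n (by rw [permCongr_pow_apply, hn, Equiv.apply_symm_apply])
section Splice

variable [DecidableEq α] {p : Perm α} {a : α}

lemma splice_fix (hpa : p a ≠ a) : (Equiv.swap a (p a) * p) a = a := by
  simp [Equiv.Perm.mul_apply, Equiv.swap_apply_right]

lemma splice_pred (hpa : p a ≠ a) : ∀ x : α, x ≠ a ↔ (Equiv.swap a (p a) * p) x ≠ a := by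
  intro x
  constructor
  · intro hx h
    exact hx (by simpa using ((Equiv.swap a (p a) * p).injective
      (h.trans (splice_fix hpa).symm)))
  · intro h hx
    subst hx
    exact h (splice_fix hpa)

lemma splice_apply (hpa : p a ≠ a) {x : α} (hx : x ≠ a) :
    (Equiv.swap a (p a) * p) x = if p x = a then p a else p x := by
  rw [Equiv.Perm.mul_apply]
  split_ifs with h
  · rw [h, Equiv.swap_apply_left]
  · rw [Equiv.swap_apply_of_ne_of_ne h (fun hb => hx (p.injective hb))]

/-- spliced walk covers the original walk (avoiding `a`) -/
lemma splice_pow_of_pow (hpa : p a ≠ a) :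
    ∀ n x y, x ≠ a → y ≠ a → (p ^ n) x = y → ∃ m, ((Equiv.swap a (p a) * p) ^ m) x = y := by
  intro n
  induction n using Nat.strong_induction_on with
  | _ n IH =>
    intro x y hx hy hxy
    match n, hxy with
    | 0, rfl => exact ⟨0, rfl⟩
    | (k+1), hxy =>
      rw [pow_succ, Equiv.Perm.mul_apply] at hxy
      by_cases h : p x = a
      · rw [h] at hxy
        match k, hxy with
        | 0, rfl => exact absurd rfl hy
        | (j+1), hxy =>
          rw [pow_succ, Equiv.Perm.mul_apply] at hxy
          obtain ⟨m, hm⟩ := IH j (by omega) (p a) y hpa hy hxy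
          refine ⟨m + 1, ?_⟩
          rw [pow_succ, Equiv.Perm.mul_apply, splice_apply hpa hx, if_pos h, hm]
      · obtain ⟨m, hm⟩ := IH k (by omega) (p x) y h hy hxy
        refine ⟨m + 1, ?_⟩
        rw [pow_succ, Equiv.Perm.mul_apply, splice_apply hpa hx, if_neg h, hm]

/-- original walk covers the spliced walk -/
lemma pow_of_splice_pow (hpa : p a ≠ a) :
    ∀ m x, x ≠ a → ∃ n, (p ^ n) x = ((Equiv.swap a (p a) * p) ^ m) x := by
  intro m
  induction m with
  | zero => exact fun x _ => ⟨0, rfl⟩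
  | succ m IH =>
    intro x hx
    have hfx : (Equiv.swap a (p a) * p) x ≠ a := (splice_pred hpa x).mp hx
    obtain ⟨n, hn⟩ := IH ((Equiv.swap a (p a) * p) x) hfx
    rw [pow_succ, Equiv.Perm.mul_apply]
    by_cases h : p x = a
    · refine ⟨n + 2, ?_⟩
      have h2 : (p ^ 2) x = (Equiv.swap a (p a) * p) x := by
        rw [splice_apply hpa hx, if_pos h, sq, Equiv.Perm.mul_apply, h]
      have h3 : (p ^ (n + 2)) x = (p ^ n) ((p ^ 2) x) := by
        rw [pow_add, Equiv.Perm.mul_apply]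
      rw [h3, h2, hn]
    · refine ⟨n + 1, ?_⟩
      have h1 : p x = (Equiv.swap a (p a) * p) x := by rw [splice_apply hpa hx, if_neg h]
      rw [pow_succ, Equiv.Perm.mul_apply, h1, hn]

end Splice
section FullSplice

variable [DecidableEq α] [Finite α] {p : Perm α} {a : α}

lemma full_splice (hpa : p a ≠ a) :
    Full p ↔ Full ((Equiv.swap a (p a) * p).subtypePerm (p := (· ≠ a)) (fun x => (splice_pred hpa x).symm)) := by
  constructor
  · intro hp x y
    obtain ⟨n, -, hn⟩ := (hp x y).exists_pow_eq'
    obtain ⟨m, hm⟩ := splice_pow_of_pow hpa n x y x.2 y.2 hn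
    refine sameCycle_of_pow m ?_
    rw [Equiv.Perm.subtypePerm_pow]
    exact Subtype.ext hm
  · intro hq x y
    have key : ∀ z : α, ∃ z' : α, z' ≠ a ∧ p.SameCycle z z' := by
      intro z
      by_cases hz : z = a
      · refine ⟨p a, hpa, ?_⟩
        subst hz
        exact ⟨1, by simp⟩
      · exact ⟨z, hz, Equiv.Perm.SameCycle.refl p z⟩
    obtain ⟨x', hx', hxx'⟩ := key x
    obtain ⟨y', hy', hyy'⟩ := key y
    obtain ⟨n, -, hn⟩ := (hq ⟨x', hx'⟩ ⟨y', hy'⟩).exists_pow_eq'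
    rw [Equiv.Perm.subtypePerm_pow] at hn
    have hn' : ((Equiv.swap a (p a) * p) ^ n) x' = y' := congrArg Subtype.val hn
    obtain ⟨m, hm⟩ := pow_of_splice_pow hpa n x' hx'
    exact hxx'.trans ((sameCycle_of_pow m (hm.trans hn')).trans hyy'.symm)

end FullSplice
section Splice2

variable [DecidableEq α] {p : Perm α} {a : α}

lemma splice_pred' {b : α} (hb : p a = b) (hba : b ≠ a) :
    ∀ x : α, x ≠ a ↔ (Equiv.swap a b * p) x ≠ a := by
  subst hb; exact splice_pred hba

lemma full_splice' [Finite α] {b : α} (hb : p a = b) (hba : b ≠ a) :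
    Full p ↔ Full ((Equiv.swap a b * p).subtypePerm (p := (· ≠ a)) (fun x => (splice_pred' hb hba x).symm)) := by
  subst hb; exact full_splice hba

end Splice2

section Count

variable [Fintype α] [DecidableEq α]

lemma step_card (c : Perm α) (S : Finset α) {s : α} (hs : s ∈ S) (hcs : c s ≠ s) :
    Nat.card {p : Perm α // Full p ∧ ∀ i ∈ S, p i = c i}
      = Nat.card {q : Equiv.Perm {x : α // x ≠ s} //
          Full q ∧ ∀ i ∈ S.subtype (· ≠ s),
            q i = (Equiv.swap s (c s) * c).subtypePerm (fun x => (splice_pred' rfl hcs x).symm) i} := by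
  apply Nat.card_congr
  refine
    ⟨fun pp => ⟨(Equiv.swap s (c s) * pp.1).subtypePerm (fun x => (splice_pred' (pp.2.2 s hs) hcs x).symm),
        (full_splice' (pp.2.2 s hs) hcs).mp pp.2.1,
        fun i hi => Subtype.ext (by
          have h := pp.2.2 i (Finset.mem_subtype.mp hi)
          simp [Equiv.Perm.subtypePerm_apply, Equiv.Perm.mul_apply, h])⟩,
     fun qq => ⟨Equiv.swap s (c s) * Equiv.Perm.ofSubtype qq.1, by
          obtain ⟨q, hqfull, hqext⟩ := qq
          have h1 : (Equiv.swap s (c s) * Equiv.Perm.ofSubtype q) s = c s := by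
            rw [Equiv.Perm.mul_apply, Equiv.Perm.ofSubtype_apply_of_not_mem q (by simp),
              Equiv.swap_apply_left]
          have key : (Equiv.swap s (c s) *
                (Equiv.swap s (c s) * Equiv.Perm.ofSubtype q)).subtypePerm
                  (fun x => (splice_pred' h1 hcs x).symm) = q := by
            apply Equiv.ext
            intro x
            apply Subtype.ext
            simp [Equiv.Perm.subtypePerm_apply, Equiv.Perm.mul_apply, Equiv.swap_apply_self]
          rw [full_splice' h1 hcs, key]
          exact hqfull, by
          obtain ⟨q, hqfull, hqext⟩ := qq
          intro i hi
          by_cases h : i = s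
          · subst h
            rw [Equiv.Perm.mul_apply, Equiv.Perm.ofSubtype_apply_of_not_mem q (by simp),
              Equiv.swap_apply_left]
          · have hq2 := hqext ⟨i, h⟩ (Finset.mem_subtype.mpr hi)
            have hval : (q ⟨i, h⟩ : α) = Equiv.swap s (c s) (c i) := by
              rw [hq2]; rfl
            rw [Equiv.Perm.mul_apply, Equiv.Perm.ofSubtype_apply_of_mem q h, hval,
              Equiv.swap_apply_self]⟩,
     fun pp => ?_, fun qq => ?_⟩
  · -- left_inv
    obtain ⟨p, hp⟩ := pp
    apply Subtype.ext
    have h2 : ∀ x, (Equiv.swap s (c s) * p) x ≠ x → x ≠ s := by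
      intro x hx he
      exact hx (by rw [he, Equiv.Perm.mul_apply, hp.2 s hs, Equiv.swap_apply_right])
    show Equiv.swap s (c s) * Equiv.Perm.ofSubtype _ = p
    rw [Equiv.Perm.ofSubtype_subtypePerm _ h2, ← mul_assoc, Equiv.swap_mul_self, one_mul]
  · -- right_inv
    obtain ⟨q, hq⟩ := qq
    apply Subtype.ext
    apply Equiv.ext
    intro x
    apply Subtype.ext
    simp [Equiv.Perm.subtypePerm_apply, Equiv.Perm.mul_apply, Equiv.swap_apply_self]

end Count
section SubRight

open Fin.NatCast in
lemma subRight_pow (N : ℕ) [NeZero N] (k : ℕ) (x : Fin N) :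
    ((Equiv.subRight (1 : Fin N) : Perm (Fin N)) ^ k) x = x - (k : Fin N) := by
  induction k with
  | zero => simp
  | succ k ih =>
      rw [_root_.pow_succ', Equiv.Perm.mul_apply, ih, Equiv.subRight_apply]
      push_cast
      abel

open Fin.NatCast in
lemma full_subRight (N : ℕ) [NeZero N] : Full (Equiv.subRight (1 : Fin N) : Perm (Fin N)) := by
  intro x y
  refine sameCycle_of_pow (x - y).1 ?_
  rw [subRight_pow, Fin.cast_val_eq_self, sub_sub_cancel]

lemma card_ne (α : Type*) [Fintype α] [DecidableEq α] (s : α) :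
    Fintype.card {x : α // x ≠ s} = Fintype.card α - 1 := by
  simp [Fintype.card_subtype_compl, Fintype.card_subtype_eq]

end SubRight
section Master

lemma card_filter_nat {α : Type*} (P : Perm α → Prop) [Fintype α] [DecidableEq α]
    [DecidablePred P] :
    Nat.card {p : Perm α // P p} = (Finset.univ.filter P).card := by
  rw [Nat.card_eq_fintype_card, Fintype.card_subtype]

lemma exists_full (α : Type*) [Fintype α] [Nonempty α] : ∃ c : Perm α, Full c := by
  haveI : NeZero (Fintype.card α) := ⟨Fintype.card_pos.ne'⟩
  exact ⟨((Fintype.equivFin α).symm).permCongr (Equiv.subRight (1 : Fin (Fintype.card α))),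
    full_permCongr _ (full_subRight _)⟩

lemma master :
    ∀ (n : ℕ) (α : Type) [Fintype α] [DecidableEq α] (c : Perm α), Full c →
      Fintype.card α = n → ∀ S : Finset α, S ≠ Finset.univ →
      Nat.card {p : Perm α // Full p ∧ ∀ i ∈ S, p i = c i} = (n - S.card - 1)! := by
  intro n
  induction n using Nat.strong_induction_on with
  | _ n IH =>
  intro α _ _ c hc hcard S hS
  classical
  have key : ∀ (S : Finset α), S.Nonempty → S ≠ Finset.univ → ∀ (c : Perm α), Full c →
      Nat.card {p : Perm α // Full p ∧ ∀ i ∈ S, p i = c i} = (n - S.card - 1)! := by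
    rintro S ⟨s, hs⟩ hSu c hc
    obtain ⟨x, hx⟩ : ∃ x, x ∉ S := by
      by_contra h
      push_neg at h
      exact hSu (Finset.eq_univ_iff_forall.mpr h)
    have hxs : x ≠ s := fun h => hx (h ▸ hs)
    have hcs : c s ≠ s := full_apply_ne hc hxs.symm
    rw [step_card c S hs hcs]
    have hcard' : Fintype.card {y : α // y ≠ s} = n - 1 := by
      rw [card_ne, hcard]
    have hSlt : S.card < n := hcard ▸ (Finset.card_lt_iff_ne_univ S).mpr hSu
    have hScard1 : 1 ≤ S.card := Finset.card_pos.mpr ⟨s, hs⟩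
    have hfullc' : Full ((Equiv.swap s (c s) * c).subtypePerm (p := (· ≠ s)) (fun x => (splice_pred' rfl hcs x).symm)) :=
      (full_splice' rfl hcs).mp hc
    have hS'u : S.subtype (· ≠ s) ≠ Finset.univ := by
      intro h
      have : (⟨x, hxs⟩ : {y : α // y ≠ s}) ∈ S.subtype (· ≠ s) := h ▸ Finset.mem_univ _
      exact hx (Finset.mem_subtype.mp this)
    have hScard : (S.subtype (· ≠ s)).card = S.card - 1 := by
      rw [Finset.card_subtype, Finset.filter_ne', Finset.card_erase_of_mem hs]
    rw [IH (n-1) (by omega) _ _ hfullc' hcard' _ hS'u, hScard]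
    congr 1
    omega
  rcases S.eq_empty_or_nonempty with rfl | hSne
  swap
  · exact key S hSne hS c hc
  have e0 : Nat.card {p : Perm α // Full p ∧ ∀ i ∈ (∅ : Finset α), p i = c i}
      = Nat.card {p : Perm α // Full p} :=
    Nat.card_congr (Equiv.subtypeEquivRight (by simp))
  have hn1 : 1 ≤ n := by
    obtain ⟨a, -⟩ := Finset.nonempty_iff_ne_empty.mpr
      (fun h : (Finset.univ : Finset α) = ∅ => hS h.symm)
    haveI : Nonempty α := ⟨a⟩
    rw [← hcard]
    exact Fintype.card_pos
  by_cases hn2 : n = 1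
  · subst hn2
    haveI : Subsingleton α := Fintype.card_le_one_iff_subsingleton.mp (by omega)
    haveI : Subsingleton (Perm α) := ⟨fun a b => Equiv.ext fun z => Subsingleton.elim _ _⟩
    haveI : Nonempty {p : Perm α // Full p} :=
      ⟨⟨1, fun u v => by obtain rfl := Subsingleton.elim u v; exact ⟨0, by simp⟩⟩⟩
    rw [e0, Nat.card_unique]
    simp [Nat.factorial]
  · haveI : Nontrivial α := Fintype.one_lt_card_iff_nontrivial.mp (by omega)
    obtain ⟨s⟩ : Nonempty α := inferInstance
    obtain ⟨c₀, hc₀⟩ := exists_full α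
    obtain ⟨x0, hx0⟩ := exists_ne s
    have hc₀s : c₀ s ≠ s := full_apply_ne hc₀ (Ne.symm hx0)
    rw [e0, card_filter_nat]
    rw [Finset.card_eq_sum_card_fiberwise (f := fun p : Perm α => p s) (t := Finset.univ)
      (fun p _ => Finset.mem_univ _)]
    have hterm : ∀ t : α, t ≠ s →
        ((Finset.univ.filter fun p : Perm α => Full p).filter fun p => p s = t).card
          = (n - 2)! := by
      intro t ht
      have hσs : Equiv.swap (c₀ s) t s = s :=
        Equiv.swap_apply_of_ne_of_ne (Ne.symm hc₀s) (Ne.symm ht)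
      have hct : Full (Equiv.swap (c₀ s) t * c₀ * (Equiv.swap (c₀ s) t)⁻¹) :=
        full_conj _ hc₀
      have hcts : (Equiv.swap (c₀ s) t * c₀ * (Equiv.swap (c₀ s) t)⁻¹) s = t := by
        rw [Equiv.Perm.mul_apply, Equiv.Perm.mul_apply, Equiv.swap_inv, hσs,
          Equiv.swap_apply_left]
      have hsu : ({s} : Finset α) ≠ Finset.univ := by
        intro h
        exact hx0 (Finset.mem_singleton.mp (h ▸ Finset.mem_univ x0))
      have h1 := key {s} ⟨s, Finset.mem_singleton_self s⟩ hsu _ hct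
      have h2 : ((Finset.univ.filter fun p : Perm α => Full p).filter fun p => p s = t)
          = Finset.univ.filter (fun p : Perm α => Full p ∧ ∀ i ∈ ({s} : Finset α),
              p i = (Equiv.swap (c₀ s) t * c₀ * (Equiv.swap (c₀ s) t)⁻¹) i) := by
        rw [Finset.filter_filter]
        apply Finset.filter_congr
        intro p _
        simp only [Finset.mem_singleton, forall_eq, hcts]
      rw [h2, ← card_filter_nat, h1, Finset.card_singleton]
      congr 1
    have hs0 : ((Finset.univ.filter fun p : Perm α => Full p).filter fun p => p s = s).card
        = 0 := by
      rw [Finset.card_eq_zero, Finset.filter_eq_empty_iff]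
      intro p hp
      exact full_apply_ne (Finset.mem_filter.mp hp).2 (Ne.symm hx0)
    rw [Finset.sum_eq_sum_sdiff_singleton_add (Finset.mem_univ s), hs0, add_zero]
    have hconst : ∀ t ∈ Finset.univ \ {s},
        ((Finset.univ.filter fun p : Perm α => Full p).filter fun p => p s = t).card
          = (n-2)! := by
      intro t ht
      exact hterm t (by simpa using (Finset.mem_sdiff.mp ht).2)
    rw [Finset.sum_congr rfl hconst, Finset.sum_const, smul_eq_mul]
    have hcardsd : (Finset.univ \ {s} : Finset α).card = n - 1 := by
      rw [Finset.card_sdiff_of_subset (by simp), Finset.card_singleton, Finset.card_univ, hcard]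
    rw [hcardsd, Finset.card_empty, Nat.sub_zero]
    have h3 : n - 2 = (n - 1) - 1 := by omega
    rw [h3, Nat.mul_factorial_pred (by omega)]

end Master
section Final

lemma full_iff_cycle {α : Type*} [Fintype α] [DecidableEq α] (h2 : 2 ≤ Fintype.card α)
    (p : Perm α) : (p.IsCycle ∧ p.support.card = Fintype.card α) ↔ Full p := by
  constructor
  · rintro ⟨hc, hsupp⟩
    have hsup : p.support = Finset.univ :=
      Finset.eq_of_subset_of_card_le (Finset.subset_univ _)
        (by rw [Finset.card_univ, hsupp])
    have hmove : ∀ x : α, p x ≠ x := fun x =>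
      Equiv.Perm.mem_support.mp (hsup ▸ Finset.mem_univ x)
    obtain ⟨x0, hx0, hx0'⟩ := hc
    exact fun x y => (hx0' (hmove x)).symm.trans (hx0' (hmove y))
  · intro hF
    obtain ⟨a, b, hab⟩ := Fintype.one_lt_card_iff.mp (show 1 < Fintype.card α by omega)
    have hmove : ∀ x : α, p x ≠ x := fun x hx =>
      hab ((full_fix hF hx a).trans (full_fix hF hx b).symm)
    have hsup : p.support = Finset.univ :=
      Finset.eq_univ_iff_forall.mpr fun x => Equiv.Perm.mem_support.mpr (hmove x)
    exact ⟨⟨a, hmove a, fun y _ => hF a y⟩, by rw [hsup, Finset.card_univ]⟩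

lemma count_eq_count (N : ℕ) [NeZero N] :
    Nat.card {p : Equiv.Perm (Fin N) //
        p.IsCycle ∧ p.support.card = N ∧ ∀ x : Fin N, p x ≠ x - 1}
      = Nat.card {p : Equiv.Perm (Fin N) // Full p ∧ ∀ x : Fin N, p x ≠ x - 1} := by
  apply Nat.card_congr
  apply Equiv.subtypeEquivRight
  intro p
  rcases Nat.lt_or_ge N 2 with hN | hN
  · have hN1 : N = 1 := by have := NeZero.pos N; omega
    subst hN1
    have hbad : ¬ (∀ x : Fin 1, p x ≠ x - 1) := fun h =>
      h 0 (Subsingleton.elim (p 0) (0 - 1))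
    constructor
    · rintro ⟨-, -, h⟩; exact absurd h hbad
    · rintro ⟨-, h⟩; exact absurd h hbad
  · have hiff := full_iff_cycle (α := Fin N) (by simpa using hN) p
    rw [Fintype.card_fin] at hiff
    constructor
    · rintro ⟨h1, h2, h3⟩; exact ⟨hiff.mp ⟨h1, h2⟩, h3⟩
    · rintro ⟨hF, h3⟩
      obtain ⟨h1, h2⟩ := hiff.mpr hF
      exact ⟨h1, h2, h3⟩

end Final
end CycShift
open CycShift in
/-- The number of `N`-cycles `p` on `[N]` with no `i` satisfying
`p(i) ≡ i - 1 (mod N)` equals `N!·∑_{μ=0}^{N-1} (-1)^μ/((N-μ)·μ!) + (-1)^N`. -/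
theorem card_cycles_no_shift (N : ℕ) [NeZero N] :
    (Nat.card {p : Equiv.Perm (Fin N) //
        p.IsCycle ∧ p.support.card = N ∧ ∀ x : Fin N, p x ≠ x - 1} : ℚ)
      = (N ! : ℚ) * (∑ μ ∈ Finset.range N, (-1 : ℚ) ^ μ / (((N : ℚ) - μ) * (μ ! : ℚ)))
          + (-1 : ℚ) ^ N := by
  classical
  set c : Perm (Fin N) := Equiv.subRight (1 : Fin N) with hcdef
  have hcapp : ∀ x : Fin N, c x = x - 1 := fun x => rfl
  rw [count_eq_count, card_filter_nat]
  have hsplit : Finset.univ.filter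
      (fun p : Perm (Fin N) => Full p ∧ ∀ x : Fin N, p x ≠ x - 1)
      = (Finset.univ.filter (fun p : Perm (Fin N) => Full p)).filter
          (fun p => ∀ x : Fin N, p x ≠ x - 1) := by
    rw [Finset.filter_filter]
  set F := Finset.univ.filter (fun p : Perm (Fin N) => Full p) with hF
  rw [hsplit]
  have hcast : (((F.filter (fun p => ∀ x : Fin N, p x ≠ x - 1)).card : ℕ) : ℚ)
      = ∑ p ∈ F, ∏ i ∈ Finset.univ, ((if p i = c i then (-1:ℚ) else 0) + 1) := by
    rw [← Finset.sum_boole]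
    apply Finset.sum_congr rfl
    intro p _
    by_cases hC : ∀ x : Fin N, p x ≠ x - 1
    · rw [if_pos hC,
        Finset.prod_congr rfl (fun i _ => by rw [if_neg (by rw [hcapp]; exact hC i)])]
      simp
    · rw [if_neg hC]
      push_neg at hC
      obtain ⟨x, hx⟩ := hC
      rw [Finset.prod_eq_zero (Finset.mem_univ x)
        (by rw [if_pos (by rw [hcapp]; exact hx)]; norm_num)]
  rw [hcast]
  have hexp : ∀ p : Perm (Fin N),
      ∏ i ∈ Finset.univ, ((if p i = c i then (-1:ℚ) else 0) + 1)
        = ∑ t ∈ (Finset.univ : Finset (Fin N)).powerset,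
            (-1:ℚ)^t.card * (if (∀ i ∈ t, p i = c i) then 1 else 0) := by
    intro p
    rw [Finset.prod_add]
    apply Finset.sum_congr rfl
    intro t _
    rw [Finset.prod_const_one, mul_one]
    by_cases h : ∀ i ∈ t, p i = c i
    · rw [if_pos h, mul_one,
        Finset.prod_congr rfl (fun i hi => if_pos (h i hi)), Finset.prod_const]
    · have h' := h
      push_neg at h'
      obtain ⟨i, hit, hne⟩ := h'
      rw [if_neg h, mul_zero, Finset.prod_eq_zero hit (by rw [if_neg hne])]
  rw [Finset.sum_congr rfl (fun p _ => hexp p), Finset.sum_comm]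
  have hinner : ∀ t : Finset (Fin N),
      ∑ p ∈ F, (-1:ℚ)^t.card * (if (∀ i ∈ t, p i = c i) then 1 else 0)
        = (-1:ℚ)^t.card * ((F.filter (fun p => ∀ i ∈ t, p i = c i)).card : ℚ) := by
    intro t
    rw [← Finset.mul_sum, Finset.sum_boole]
  rw [Finset.sum_congr rfl (fun t _ => hinner t)]
  have hval : ∀ t : Finset (Fin N),
      ((F.filter (fun p => ∀ i ∈ t, p i = c i)).card : ℚ)
        = if t.card = N then 1 else ((N - t.card - 1)! : ℚ) := by
    intro t
    have hnat : (F.filter (fun p => ∀ i ∈ t, p i = c i)).card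
        = Nat.card {p : Perm (Fin N) // Full p ∧ ∀ i ∈ t, p i = c i} := by
      rw [card_filter_nat, hF, Finset.filter_filter]
    by_cases ht : t.card = N
    · have htu : t = Finset.univ := by
        rw [← Finset.card_eq_iff_eq_univ, Fintype.card_fin]
        exact ht
      subst htu
      haveI : Unique {p : Perm (Fin N) // Full p ∧ ∀ i ∈ Finset.univ, p i = c i} := by
        refine ⟨⟨⟨c, full_subRight N, fun i _ => rfl⟩⟩, ?_⟩
        rintro ⟨p, hp, hext⟩
        exact Subtype.ext (Equiv.ext fun i => hext i (Finset.mem_univ i))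
      rw [if_pos ht, hnat, Nat.card_unique, Nat.cast_one]
    · have htu : t ≠ Finset.univ := fun h =>
        ht (by rw [h, Finset.card_univ, Fintype.card_fin])
      rw [if_neg ht, hnat,
        master N (Fin N) c (full_subRight N) (Fintype.card_fin N) t htu]
  rw [Finset.sum_congr rfl (fun t _ => by rw [hval t])]
  rw [Finset.sum_powerset]
  have hpc : ∀ j : ℕ, ∑ t ∈ Finset.powersetCard j (Finset.univ : Finset (Fin N)),
      (-1:ℚ)^t.card * (if t.card = N then 1 else ((N - t.card - 1)! : ℚ))
        = (N.choose j) • ((-1:ℚ)^j * (if j = N then 1 else ((N - j - 1)! : ℚ))) := by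
    intro j
    rw [Finset.sum_powersetCard j Finset.univ
      (fun m => (-1:ℚ)^m * (if m = N then 1 else ((N - m - 1)! : ℚ)))]
    rw [Finset.card_univ, Fintype.card_fin]
  rw [show #(Finset.univ : Finset (Fin N)) = N by rw [Finset.card_univ, Fintype.card_fin]]
  rw [Finset.sum_congr rfl (fun j _ => hpc j)]
  rw [Finset.sum_range_succ, if_pos rfl, Nat.choose_self, one_smul, mul_one]
  congr 1
  rw [Finset.mul_sum]
  apply Finset.sum_congr rfl
  intro j hj
  have hjN : j < N := Finset.mem_range.mp hj
  rw [if_neg (by omega), nsmul_eq_mul]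
  have h1 : (N - j) * (N - j - 1)! = (N - j)! := Nat.mul_factorial_pred (by omega)
  have h2 : N.choose j * j ! * (N - j)! = N ! :=
    Nat.choose_mul_factorial_mul_factorial (le_of_lt hjN)
  have hcastsub : ((N:ℚ) - j) = ((N - j : ℕ) : ℚ) := by
    rw [Nat.cast_sub hjN.le]
  rw [hcastsub]
  have hd1 : (((N - j : ℕ)) : ℚ) ≠ 0 := Nat.cast_ne_zero.mpr (by omega)
  have hd2 : ((j ! : ℕ) : ℚ) ≠ 0 := Nat.cast_ne_zero.mpr (Nat.factorial_ne_zero j)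
  field_simp
  push_cast [← h2, ← h1]
  ring
end
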